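/- arXiv:2005.12846 — 8 statements merged into one kernel-verified Lean document; each statement's English description precedes it below -/
import Mathlib

section
/- Let X be a nonempty set, C a nonempty family of subsets of X, and Δ : C → P(X) a map with C ⊆ Δ(C) for every C ∈ C. Suppose there exist a bounded set function γ : C → [0,∞) and a constant λ > 1 such that whenever C₁, C₂ ∈ C, C₁ ∩ C₂ ≠ ∅ and γ(C₁) ≤ λ·γ(C₂), then C₁ ⊆ Δ(C₂). Then there exists a subfamily D ⊆ C whose members are pairwise disjoint and such that ⋃_{C ∈ C} C ⊆ ⋃_{D ∈ D} Δ(D). -/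
open Set

theorem abstract_vitali_first_form_V1 {X : Type*} [Nonempty X]
    (𝒞 : Set (Set X)) (h𝒞 : 𝒞.Nonempty)
    (Δ : Set X → Set X) (hΔ : ∀ C ∈ 𝒞, C ⊆ Δ C)
    (γ : Set X → ℝ) (hγ0 : ∀ C ∈ 𝒞, 0 ≤ γ C) (hbdd : BddAbove (γ '' 𝒞))
    (lam : ℝ) (hlam : 1 < lam)
    (hV1 : ∀ C₁ ∈ 𝒞, ∀ C₂ ∈ 𝒞, (C₁ ∩ C₂).Nonempty → γ C₁ ≤ lam * γ C₂ → C₁ ⊆ Δ C₂) :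
    ∃ 𝒟 ⊆ 𝒞, 𝒟.Pairwise Disjoint ∧ ⋃₀ 𝒞 ⊆ ⋃ D ∈ 𝒟, Δ D := by
  classical
  -- restrict to nonempty members
  set 𝒞' : Set (Set X) := {C | C ∈ 𝒞 ∧ C.Nonempty} with h𝒞'
  -- the collection of "good" disjoint families
  set S : Set (Set (Set X)) := {𝒟 | 𝒟 ⊆ 𝒞' ∧ 𝒟.Pairwise Disjoint ∧
    ∀ C ∈ 𝒞', (∃ D ∈ 𝒟, (C ∩ D).Nonempty ∧ γ C ≤ lam * γ D) ∨ ∀ D ∈ 𝒟, Disjoint C D}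
    with hS
  have hchain : ∀ c ⊆ S, IsChain (· ⊆ ·) c → ∃ ub ∈ S, ∀ s ∈ c, s ⊆ ub := by
    intro c hcS hc
    refine ⟨⋃₀ c, ⟨?_, ?_, ?_⟩, fun s hs => subset_sUnion_of_mem hs⟩
    · exact sUnion_subset fun s hs => (hcS hs).1
    · intro a ha b hb hab
      obtain ⟨sa, hsa, ha'⟩ := ha
      obtain ⟨sb, hsb, hb'⟩ := hb
      rcases hc.total hsa hsb with h | h
      · exact (hcS hsb).2.1 (h ha') hb' hab
      · exact (hcS hsa).2.1 ha' (h hb') hab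
    · intro C hC
      by_cases h : ∀ D ∈ ⋃₀ c, Disjoint C D
      · exact Or.inr h
      · push_neg at h
        obtain ⟨D, ⟨s, hs, hDs⟩, hCD⟩ := h
        rcases (hcS hs).2.2 C hC with ⟨D', hD', hmeet, hle⟩ | hdisj
        · exact Or.inl ⟨D', ⟨s, hs, hD'⟩, hmeet, hle⟩
        · exact absurd (hdisj D hDs) hCD
  obtain ⟨𝒟, h𝒟S, h𝒟max⟩ := zorn_subset S hchain
  obtain ⟨h𝒟sub, h𝒟dis, h𝒟P⟩ := h𝒟S
  refine ⟨𝒟, fun D hD => (h𝒟sub hD).1, h𝒟dis, ?_⟩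
  rintro x ⟨C, hC𝒞, hxC⟩
  have hC' : C ∈ 𝒞' := ⟨hC𝒞, ⟨x, hxC⟩⟩
  rcases h𝒟P C hC' with ⟨D, hD, hmeet, hle⟩ | hdisj
  · exact mem_biUnion hD (hV1 C hC𝒞 D (h𝒟sub hD).1 hmeet hle hxC)
  -- C is disjoint from all of 𝒟: derive a contradiction with maximality
  exfalso
  set A : Set (Set X) := {C' | C' ∈ 𝒞' ∧ ∀ D ∈ 𝒟, Disjoint C' D} with hA
  have hCA : C ∈ A := ⟨hC', hdisj⟩
  have hAne : A.Nonempty := ⟨C, hCA⟩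
  have hAsub : A ⊆ 𝒞 := fun C' hC' => hC'.1.1
  have hbddA : BddAbove (γ '' A) := hbdd.mono (image_mono (f := γ) hAsub)
  set t : ℝ := sSup (γ '' A) with ht
  have htge : ∀ C' ∈ A, γ C' ≤ t := fun C' h => le_csSup hbddA ⟨C', h, rfl⟩
  have ht0 : 0 ≤ t := le_trans (hγ0 C hC𝒞) (htge C hCA)
  -- choose C₀ ∈ A with t ≤ lam * γ C₀
  have hex : ∃ C₀ ∈ A, t ≤ lam * γ C₀ := by
    rcases eq_or_lt_of_le ht0 with h0 | h0
    · exact ⟨C, hCA, by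
        rw [← h0]
        exact mul_nonneg (le_of_lt (lt_trans one_pos hlam)) (hγ0 C hC𝒞)⟩
    · have hlt : t / lam < t := by
        rw [div_lt_iff₀ (lt_trans one_pos hlam)]
        nlinarith
      obtain ⟨y, ⟨C₀, hC₀A, rfl⟩, hy⟩ := exists_lt_of_lt_csSup (hAne.image γ) hlt
      refine ⟨C₀, hC₀A, ?_⟩
      rw [div_lt_iff₀ (lt_trans one_pos hlam)] at hy
      linarith [hy]
  obtain ⟨C₀, hC₀A, hC₀⟩ := hex
  have hC₀ne : C₀.Nonempty := hC₀A.1.2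
  have hC₀not : C₀ ∉ 𝒟 := fun h =>
    hC₀ne.ne_empty (by simpa using disjoint_self.mp (hC₀A.2 C₀ h))
  -- the enlarged family
  have hins : insert C₀ 𝒟 ∈ S := by
    refine ⟨insert_subset hC₀A.1 h𝒟sub, ?_, ?_⟩
    · apply h𝒟dis.insert
      intro D hD _
      exact ⟨hC₀A.2 D hD, (hC₀A.2 D hD).symm⟩
    · intro C' hC'𝒞
      rcases h𝒟P C' hC'𝒞 with ⟨D, hD, hmeet, hle⟩ | hdisj'
      · exact Or.inl ⟨D, mem_insert_of_mem _ hD, hmeet, hle⟩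
      · by_cases hme : (C' ∩ C₀).Nonempty
        · exact Or.inl ⟨C₀, mem_insert _ _, hme,
            le_trans (htge C' ⟨hC'𝒞, hdisj'⟩) hC₀⟩
        · refine Or.inr ?_
          intro D hD
          rcases hD with rfl | hD
          · rw [Set.not_nonempty_iff_eq_empty] at hme
            exact Set.disjoint_iff_inter_eq_empty.mpr hme
          · exact hdisj' D hD
  exact hC₀not (h𝒟max hins (subset_insert _ _) (mem_insert _ _))
end

section
/- Let X be a nonempty set, C a nonempty family of subsets of X, and Δ : C → P(X) a map with C ⊆ Δ(C) for every C ∈ C. Suppose there exists a bounded set function γ : C → [0,∞) such that for every subfamily G ⊆ C the supremum of {γ(C) : C ∈ G} is attained, and such that whenever C₁, C₂ ∈ C, C₁ ∩ C₂ ≠ ∅ and γ(C₁) ≤ γ(C₂), then C₁ ⊆ Δ(C₂). Then there exists a pairwise disjoint subfamily D ⊆ C with ⋃_{C ∈ C} C ⊆ ⋃_{D ∈ D} Δ(D). -/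
open Set

theorem abstract_vitali_first_form_V2 {X : Type*} [Nonempty X]
    (𝒞 : Set (Set X)) (h𝒞 : 𝒞.Nonempty)
    (Δ : Set X → Set X) (hΔ : ∀ C ∈ 𝒞, C ⊆ Δ C)
    (γ : Set X → ℝ) (hγ0 : ∀ C ∈ 𝒞, 0 ≤ γ C) (hbdd : BddAbove (γ '' 𝒞))
    (hmax : ∀ 𝒢 ⊆ 𝒞, 𝒢.Nonempty → ∃ C ∈ 𝒢, ∀ C' ∈ 𝒢, γ C' ≤ γ C)
    (hV2 : ∀ C₁ ∈ 𝒞, ∀ C₂ ∈ 𝒞, (C₁ ∩ C₂).Nonempty → γ C₁ ≤ γ C₂ → C₁ ⊆ Δ C₂) :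
    ∃ 𝒟 ⊆ 𝒞, 𝒟.Pairwise Disjoint ∧ ⋃₀ 𝒞 ⊆ ⋃ D ∈ 𝒟, Δ D := by
  -- "good" families
  set S : Set (Set (Set X)) := {𝒟 | 𝒟 ⊆ 𝒞 ∧ 𝒟.Pairwise Disjoint ∧
    ∀ C ∈ 𝒞, (∃ D ∈ 𝒟, (C ∩ D).Nonempty) → ∃ D ∈ 𝒟, (C ∩ D).Nonempty ∧ γ C ≤ γ D} with hS
  have hzorn : ∃ m, Maximal (· ∈ S) m := by
    apply zorn_subset
    intro c hcS hchain
    refine ⟨⋃₀ c, ⟨?_, ?_, ?_⟩, fun s hs => subset_sUnion_of_mem hs⟩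
    · intro D hD
      obtain ⟨a, hac, hDa⟩ := hD
      exact (hcS hac).1 hDa
    · intro D₁ hD₁ D₂ hD₂ hne
      obtain ⟨a, hac, h1⟩ := hD₁
      obtain ⟨b, hbc, h2⟩ := hD₂
      rcases hchain.total hac hbc with hab | hba
      · exact (hcS hbc).2.1 (hab h1) h2 hne
      · exact (hcS hac).2.1 h1 (hba h2) hne
    · rintro C hC ⟨D, ⟨a, hac, hDa⟩, hCD⟩
      obtain ⟨D', hD'a, h⟩ := (hcS hac).2.2 C hC ⟨D, hDa, hCD⟩
      exact ⟨D', ⟨a, hac, hD'a⟩, h⟩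
  obtain ⟨𝒟, h𝒟S, hmaxD⟩ := hzorn
  obtain ⟨h𝒟C, h𝒟disj, h𝒟good⟩ := h𝒟S
  -- key claim: every nonempty C ∈ 𝒞 meets some D ∈ 𝒟 with γ C ≤ γ D
  have key : ∀ C ∈ 𝒞, C.Nonempty → ∃ D ∈ 𝒟, (C ∩ D).Nonempty ∧ γ C ≤ γ D := by
    intro C hC hCne
    by_contra hfail
    -- then C is disjoint from every member of 𝒟
    have hCdisj : ∀ D ∈ 𝒟, ¬(C ∩ D).Nonempty := by
      intro D hD hmeet
      exact hfail (h𝒟good C hC ⟨D, hD, hmeet⟩)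
    set 𝒢 : Set (Set X) := {C' ∈ 𝒞 | C'.Nonempty ∧ ∀ D ∈ 𝒟, ¬(C' ∩ D).Nonempty} with h𝒢
    have h𝒢sub : 𝒢 ⊆ 𝒞 := fun _ h => h.1
    have h𝒢ne : 𝒢.Nonempty := ⟨C, hC, hCne, hCdisj⟩
    obtain ⟨M, ⟨hM𝒞, hMne, hMdisj⟩, hMmax⟩ := hmax 𝒢 h𝒢sub h𝒢ne
    have hMnotin : M ∉ 𝒟 := by
      intro hM𝒟
      exact hMdisj M hM𝒟 ⟨hMne.choose, hMne.choose_spec, hMne.choose_spec⟩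
    have hnew : insert M 𝒟 ∈ S := by
      refine ⟨insert_subset hM𝒞 h𝒟C, ?_, ?_⟩
      · refine h𝒟disj.insert fun D hD _ => ?_
        constructor
        · rw [Set.disjoint_iff_inter_eq_empty]
          exact not_nonempty_iff_eq_empty.mp (hMdisj D hD)
        · rw [Set.disjoint_iff_inter_eq_empty, inter_comm]
          exact not_nonempty_iff_eq_empty.mp (hMdisj D hD)
      · rintro C' hC' ⟨D, hD, hmeet⟩
        rcases hD with rfl | hD𝒟
        · by_cases hC'𝒟 : ∃ D' ∈ 𝒟, (C' ∩ D').Nonempty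
          · obtain ⟨D', hD', h⟩ := h𝒟good C' hC' hC'𝒟
            exact ⟨D', mem_insert_of_mem _ hD', h⟩
          · push_neg at hC'𝒟
            have hC'ne : C'.Nonempty := ⟨hmeet.choose, hmeet.choose_spec.1⟩
            have : C' ∈ 𝒢 := ⟨hC', hC'ne, fun D' hD' => not_nonempty_iff_eq_empty.mpr (hC'𝒟 D' hD')⟩
            exact ⟨D, mem_insert _ _, hmeet, hMmax C' this⟩
        · obtain ⟨D', hD', h⟩ := h𝒟good C' hC' ⟨D, hD𝒟, hmeet⟩
          exact ⟨D', mem_insert_of_mem _ hD', h⟩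
    exact hMnotin (hmaxD hnew (subset_insert M 𝒟) (mem_insert M 𝒟))
  refine ⟨𝒟, h𝒟C, h𝒟disj, ?_⟩
  rintro x ⟨C, hC, hxC⟩
  obtain ⟨D, hD, hmeet, hγ⟩ := key C hC ⟨x, hxC⟩
  have := hV2 C hC D (h𝒟C hD) hmeet hγ
  exact mem_biUnion hD (this hxC)
end

section
/- Let X be a set, A ⊆ P(X) a union-closed family of subsets of X, and γ : A → [0,∞] monotone (A ⊆ A' implies γ(A) ≤ γ(A')). Let B ⊆ A satisfy: for every sequence (Bₙ) of pairwise disjoint members of B with infₙ γ(Bₙ) > 0 one has γ(⋃ₙ Bₙ) = ∞. Let C ⊆ B with sup_{C∈C} γ(C) < ∞ and γ(C) ≠ 0 for all C ∈ C, and let λ > 1. Then there is a countable sequence (Cₙ) of pairwise disjoint members of C such that: if γ(⋃_{C∈C} C) < ∞ then ⋃_{C∈C} C ⊆ ⋃ₙ Δ(Cₙ), and if γ(⋃_{C∈C} C) = ∞ then either infₙ γ(Cₙ) > 0 or ⋃_{C∈C} C ⊆ ⋃ₙ Δ(Cₙ), where Δ(C) := ⋃ {G ∈ C : G ∩ C ≠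 ∅ and γ(G) ≤ λ·γ(C)}. -/
open Set ENNReal

/-- The dilating map `Δ^λ_{γ,𝒞}` of the second abstract Vitali covering lemma. -/
noncomputable def dilate {X : Type*} (𝒞 : Set (Set X)) (γ : Set X → ℝ≥0∞) (lam : ℝ≥0∞)
    (C : Set X) : Set X :=
  ⋃₀ {G | G ∈ 𝒞 ∧ (G ∩ C).Nonempty ∧ γ G ≤ lam * γ C}

open Classical in
/-- Pick a member `G` of `S` with `⨆ G' ∈ S, γ G' ≤ lam * γ G`, if one exists. -/
noncomputable def vpick {X : Type*} (γ : Set X → ℝ≥0∞) (lam : ℝ≥0∞) (S : Set (Set X)) :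
    Set X :=
  if h : ∃ G ∈ S, (⨆ G' ∈ S, γ G') ≤ lam * γ G then h.choose else ∅

lemma vpick_spec {X : Type*} {γ : Set X → ℝ≥0∞} {lam : ℝ≥0∞} {S : Set (Set X)}
    (hex : ∃ G ∈ S, (⨆ G' ∈ S, γ G') ≤ lam * γ G) :
    vpick γ lam S ∈ S ∧ (⨆ G' ∈ S, γ G') ≤ lam * γ (vpick γ lam S) := by
  unfold vpick
  rw [dif_pos hex]
  exact ⟨hex.choose_spec.1, hex.choose_spec.2⟩

/-- The family of sets remaining at stage `n` of the greedy selection. -/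
noncomputable def vrem {X : Type*} (𝒞 : Set (Set X)) (γ : Set X → ℝ≥0∞) (lam : ℝ≥0∞) :
    ℕ → Set (Set X)
  | 0 => 𝒞
  | n + 1 => {C | C ∈ vrem 𝒞 γ lam n ∧ Disjoint C (vpick γ lam (vrem 𝒞 γ lam n))}

lemma exists_good {X : Type*} (γ : Set X → ℝ≥0∞) {lam : ℝ≥0∞} {S : Set (Set X)}
    (hS : S.Nonempty) (hne : ∀ G ∈ S, γ G ≠ 0) (hfin : (⨆ G ∈ S, γ G) < ∞)
    (h1 : 1 < lam) (ht : lam ≠ ∞) :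
    ∃ G ∈ S, (⨆ G' ∈ S, γ G') ≤ lam * γ G := by
  set s := ⨆ G ∈ S, γ G with hs
  obtain ⟨G0, hG0⟩ := hS
  have hs0 : s ≠ 0 := fun h =>
    hne G0 hG0 (le_antisymm (h ▸ le_biSup γ hG0) zero_le)
  have hst : s ≠ ∞ := hfin.ne
  have hlam0 : lam ≠ 0 := (zero_lt_one.trans h1).ne'
  have hdiv : s / lam < s := by
    rw [ENNReal.div_lt_iff (Or.inl hlam0) (Or.inl ht)]
    conv_lhs => rw [← one_mul s]
    rw [mul_comm s lam]
    exact ENNReal.mul_lt_mul_left hs0 hst h1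
  rw [hs] at hdiv
  simp only [lt_iSup_iff] at hdiv
  obtain ⟨G, hG, hlt⟩ := hdiv
  refine ⟨G, hG, ?_⟩
  have := (ENNReal.div_lt_iff (Or.inl hlam0) (Or.inl ht)).mp hlt
  rw [mul_comm] at this
  exact this.le

theorem abstract_vitali_second_form {X : Type*}
    (𝒜 : Set (Set X)) (h𝒜 : ∀ 𝒮 ⊆ 𝒜, ⋃₀ 𝒮 ∈ 𝒜)
    (γ : Set X → ℝ≥0∞)
    (hmono : ∀ A ∈ 𝒜, ∀ A' ∈ 𝒜, A ⊆ A' → γ A ≤ γ A')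
    (ℬ : Set (Set X)) (hℬ : ℬ ⊆ 𝒜)
    (hV4 : ∀ B : ℕ → Set X, (∀ n, B n ∈ ℬ) → Pairwise (Function.onFun Disjoint B) →
      0 < ⨅ n, γ (B n) → γ (⋃ n, B n) = ∞)
    (𝒞 : Set (Set X)) (h𝒞ℬ : 𝒞 ⊆ ℬ)
    (hsup : (⨆ C ∈ 𝒞, γ C) < ∞) (hne : ∀ C ∈ 𝒞, γ C ≠ 0)
    (lam : ℝ≥0∞) (hlam : 1 < lam) :
    ∃ 𝒟 ⊆ 𝒞, 𝒟.Countable ∧ 𝒟.Pairwise Disjoint ∧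
      (γ (⋃₀ 𝒞) < ∞ → ⋃₀ 𝒞 ⊆ ⋃ C ∈ 𝒟, dilate 𝒞 γ lam C) ∧
      (γ (⋃₀ 𝒞) = ∞ →
        (0 < ⨅ C ∈ 𝒟, γ C) ∨ ⋃₀ 𝒞 ⊆ ⋃ C ∈ 𝒟, dilate 𝒞 γ lam C) := by
  classical
  -- Work with a finite dilation factor `lam' = min lam 2`.
  set lam' : ℝ≥0∞ := min lam 2 with hlam'def
  have hlam'1 : 1 < lam' := lt_min hlam one_lt_two
  have hlam't : lam' ≠ ∞ := (min_le_right _ _).trans_lt (by norm_num) |>.ne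
  have hlam'le : lam' ≤ lam := min_le_left _ _
  set c : ℕ → Set X := fun n => vpick γ lam' (vrem 𝒞 γ lam' n) with hc
  set rem : ℕ → Set (Set X) := fun n => vrem 𝒞 γ lam' n with hrem
  have hrem0 : rem 0 = 𝒞 := rfl
  have hremS : ∀ n, rem (n + 1) = {C | C ∈ rem n ∧ Disjoint C (c n)} := fun n => rfl
  -- basic structure lemmas
  have hsubC : ∀ n, rem n ⊆ 𝒞 := by
    intro n
    induction n with
    | zero => exact le_rfl
    | succ n ih => intro C hC; exact ih hC.1
  have hpick : ∀ n, (rem n).Nonempty →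
      c n ∈ rem n ∧ (⨆ G ∈ rem n, γ G) ≤ lam' * γ (c n) := by
    intro n hn
    have hfin : (⨆ G ∈ rem n, γ G) < ∞ :=
      lt_of_le_of_lt (biSup_mono fun i hi => hsubC n hi) hsup
    have hex : ∃ G ∈ rem n, (⨆ G' ∈ rem n, γ G') ≤ lam' * γ G :=
      exists_good γ hn (fun G hG => hne G (hsubC n hG)) hfin hlam'1 hlam't
    exact vpick_spec hex
  have hanti : ∀ m n, m ≤ n → rem n ⊆ rem m := by
    intro m n h
    induction n with
    | zero => rw [Nat.le_zero.mp h]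
    | succ n ih =>
      rcases Nat.lt_or_ge m (n + 1) with h' | h'
      · exact fun C hC => ih (Nat.lt_succ_iff.mp h') hC.1
      · rw [le_antisymm h h']
  have hmemrem : ∀ n, ∀ C ∈ 𝒞, (∀ k < n, Disjoint C (c k)) → C ∈ rem n := by
    intro n
    induction n with
    | zero => intro C hC _; exact hC
    | succ n ih =>
      intro C hC h
      exact ⟨ih C hC fun k hk => h k (hk.trans n.lt_succ_self),
        h n n.lt_succ_self⟩
  have hdisj : ∀ m n, m < n → (rem n).Nonempty → Disjoint (c m) (c n) := by
    intro m n hmn hn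
    have : c n ∈ rem (m + 1) := hanti (m + 1) n hmn ((hpick n hn).1)
    exact this.2.symm
  -- the key dichotomy for each member of 𝒞
  have key : ∀ C ∈ 𝒞, (∃ n, (rem n).Nonempty ∧ (C ∩ c n).Nonempty ∧
      γ C ≤ lam' * γ (c n)) ∨ (∀ n, (rem n).Nonempty ∧ Disjoint C (c n) ∧
      γ C ≤ lam' * γ (c n)) := by
    intro C hC
    by_cases hA : ∃ n, ¬ Disjoint C (c n)
    · left
      let n := Nat.find hA
      have hn : ¬ Disjoint C (c n) := Nat.find_spec hA
      have hCn : C ∈ rem n := hmemrem n C hC fun k hk =>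
        not_not.mp (Nat.find_min hA hk)
      have hnne : (rem n).Nonempty := ⟨C, hCn⟩
      refine ⟨n, hnne, Set.not_disjoint_iff_nonempty_inter.mp hn, ?_⟩
      exact le_trans (le_biSup γ hCn) (hpick n hnne).2
    · right
      push_neg at hA
      intro n
      have hCn : C ∈ rem n := hmemrem n C hC fun k _ => hA k
      have hnne : (rem n).Nonempty := ⟨C, hCn⟩
      exact ⟨hnne, hA n, le_trans (le_biSup γ hCn) (hpick n hnne).2⟩
  -- if some C is disjoint from everything chosen, then γ (⋃₀ 𝒞) = ∞
  have hinfty : ∀ C ∈ 𝒞, (∀ n, (rem n).Nonempty ∧ Disjoint C (c n) ∧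
      γ C ≤ lam' * γ (c n)) → γ (⋃₀ 𝒞) = ∞ := by
    intro C hC h
    have hcB : ∀ n, c n ∈ ℬ := fun n => h𝒞ℬ (hsubC n ((hpick n (h n).1).1))
    have hpw : Pairwise (Function.onFun Disjoint c) := by
      intro m n hmn
      rcases lt_or_gt_of_ne hmn with h' | h'
      · exact hdisj m n h' (h n).1
      · exact (hdisj n m h' (h m).1).symm
    have hpos : 0 < ⨅ n, γ (c n) := by
      have hlb : ∀ n, γ C / lam' ≤ γ (c n) := by
        intro n
        rw [ENNReal.div_le_iff_le_mul (Or.inl (zero_lt_one.trans hlam'1).ne') (Or.inl hlam't),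
          mul_comm]
        exact (h n).2.2
      refine lt_of_lt_of_le ?_ (le_iInf hlb)
      exact ENNReal.div_pos (hne C hC) hlam't
    have hU : γ (⋃ n, c n) = ∞ := hV4 c hcB hpw hpos
    have h1 : ⋃ n, c n ∈ 𝒜 := by
      have : ⋃ n, c n = ⋃₀ (Set.range c) := by rw [Set.sUnion_range]
      rw [this]
      exact h𝒜 _ (by rintro _ ⟨n, rfl⟩; exact hℬ (hcB n))
    have h2 : ⋃₀ 𝒞 ∈ 𝒜 := h𝒜 _ fun S hS => hℬ (h𝒞ℬ hS)
    have hsub : (⋃ n, c n) ⊆ ⋃₀ 𝒞 := by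
      refine Set.iUnion_subset fun n => ?_
      exact Set.subset_sUnion_of_mem (hsubC n ((hpick n (h n).1).1))
    have := hmono _ h1 _ h2 hsub
    rw [hU] at this
    exact top_le_iff.mp this
  -- the chosen family
  refine ⟨c '' {n | (rem n).Nonempty}, ?_, (Set.to_countable _).image c, ?_, ?_, ?_⟩
  · rintro _ ⟨n, hn, rfl⟩
    exact hsubC n ((hpick n hn).1)
  · rintro _ ⟨m, hm, rfl⟩ _ ⟨n, hn, rfl⟩ hmn
    rcases lt_trichotomy m n with h' | h' | h'
    · exact hdisj m n h' hn
    · exact absurd (congrArg c h') hmn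
    · exact (hdisj n m h' hm).symm
  · -- the finite case: covering
    intro hfin x hx
    obtain ⟨C, hC, hxC⟩ := hx
    rcases key C hC with ⟨n, hn, hint, hle⟩ | hB
    · refine Set.mem_biUnion ⟨n, hn, rfl⟩ ?_
      exact ⟨C, ⟨hC, hint, hle.trans (mul_le_mul_left hlam'le _)⟩, hxC⟩
    · exact absurd (hinfty C hC hB) hfin.ne
  · -- the infinite case
    intro _
    by_cases hB : ∃ C ∈ 𝒞, ∀ n, (rem n).Nonempty ∧ Disjoint C (c n) ∧
        γ C ≤ lam' * γ (c n)
    · left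
      obtain ⟨C, hC, h⟩ := hB
      have hlb : ∀ D ∈ c '' {n | (rem n).Nonempty}, γ C / lam' ≤ γ D := by
        rintro _ ⟨n, _, rfl⟩
        rw [ENNReal.div_le_iff_le_mul (Or.inl (zero_lt_one.trans hlam'1).ne') (Or.inl hlam't),
          mul_comm]
        exact (h n).2.2
      refine lt_of_lt_of_le (ENNReal.div_pos (hne C hC) hlam't) (le_iInf₂ hlb)
    · right
      intro x hx
      obtain ⟨C, hC, hxC⟩ := hx
      rcases key C hC with ⟨n, hn, hint, hle⟩ | h
      · refine Set.mem_biUnion ⟨n, hn, rfl⟩ ?_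
        exact ⟨C, ⟨hC, hint, hle.trans (mul_le_mul_left hlam'le _)⟩, hxC⟩
      · exact absurd ⟨C, hC, h⟩ hB
end

section
/- Let F be a nonempty closed subset of ℝⁿ. Then there exists a family D of pairwise disjoint left-closed right-open (dyadic) cubes such that ℝⁿ \ F = ⋃_{Q ∈ D} Q and for every Q ∈ D one has √n·L_Q ≤ dist(Q, F) ≤ 4√n·L_Q, where L_Q is the side length of Q. -/
open Set Metric

/-- The dyadic cube `2^ℓ m + 2^ℓ [0,1)ⁿ` in Euclidean space `ℝⁿ`. -/
def dyadicCubeE (n : ℕ) (ℓ : ℤ) (m : Fin n → ℤ) : Set (EuclideanSpace ℝ (Fin n)) :=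
  {x | ∀ i, (2 : ℝ) ^ ℓ * m i ≤ x i ∧ x i < (2 : ℝ) ^ ℓ * (m i + 1)}

/-- Distance between two sets: `inf {dist x y : x ∈ A, y ∈ B}`. -/
noncomputable def setDist {α : Type*} [MetricSpace α] (A B : Set α) : ℝ :=
  sInf {d : ℝ | ∃ x ∈ A, ∃ y ∈ B, d = dist x y}

namespace WhitneyAux

lemma mem_dyadicCubeE_iff {n : ℕ} {ℓ : ℤ} {m : Fin n → ℤ} {x : EuclideanSpace ℝ (Fin n)} :
    x ∈ dyadicCubeE n ℓ m ↔ ∀ i, ⌊x i / (2:ℝ) ^ ℓ⌋ = m i := by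
  have h2 : (0:ℝ) < (2:ℝ) ^ ℓ := by positivity
  unfold dyadicCubeE
  simp only [Set.mem_setOf_eq]
  refine forall_congr' fun i => ?_
  rw [Int.floor_eq_iff]
  rw [le_div_iff₀ h2, div_lt_iff₀ h2]
  constructor
  · rintro ⟨h1, h3⟩
    exact ⟨by linarith, by linarith⟩
  · rintro ⟨h1, h3⟩
    exact ⟨by linarith, by linarith⟩

/-- The dyadic cube of scale `2^ℓ` containing `x`. -/
noncomputable def cubeOf (n : ℕ) (ℓ : ℤ) (x : EuclideanSpace ℝ (Fin n)) :
    Set (EuclideanSpace ℝ (Fin n)) :=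
  dyadicCubeE n ℓ (fun i => ⌊x i / (2:ℝ) ^ ℓ⌋)

lemma mem_cubeOf_iff {n : ℕ} {ℓ : ℤ} {x y : EuclideanSpace ℝ (Fin n)} :
    y ∈ cubeOf n ℓ x ↔ ∀ i, ⌊y i / (2:ℝ) ^ ℓ⌋ = ⌊x i / (2:ℝ) ^ ℓ⌋ :=
  mem_dyadicCubeE_iff

lemma mem_cubeOf_self {n : ℕ} (ℓ : ℤ) (x : EuclideanSpace ℝ (Fin n)) :
    x ∈ cubeOf n ℓ x :=
  mem_cubeOf_iff.2 fun _ => rfl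

lemma cubeOf_eq_of_mem {n : ℕ} {ℓ : ℤ} {x y : EuclideanSpace ℝ (Fin n)}
    (h : y ∈ cubeOf n ℓ x) : cubeOf n ℓ y = cubeOf n ℓ x :=
  congrArg (dyadicCubeE n ℓ) (funext fun i => mem_cubeOf_iff.1 h i)

lemma floor_div_two' (a : ℝ) : ⌊a / 2⌋ = ⌊(⌊a⌋ : ℝ) / 2⌋ := by
  have h1 : (⌊a⌋:ℝ) ≤ a := Int.floor_le a
  have h2 : a < ⌊a⌋ + 1 := Int.lt_floor_add_one a
  rcases Int.even_or_odd ⌊a⌋ with ⟨j, hj⟩ | ⟨j, hj⟩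
  · have hj' : (⌊a⌋:ℝ) = 2 * j := by rw [hj]; push_cast; ring
    have e1 : ⌊a / 2⌋ = j := by
      rw [Int.floor_eq_iff]
      exact ⟨by linarith, by push_cast; linarith⟩
    have e2 : ⌊(⌊a⌋:ℝ) / 2⌋ = j := by
      rw [Int.floor_eq_iff]
      exact ⟨by linarith, by push_cast; linarith⟩
    rw [e1, e2]
  · have hj' : (⌊a⌋:ℝ) = 2 * j + 1 := by rw [hj]; push_cast; ring
    have e1 : ⌊a / 2⌋ = j := by
      rw [Int.floor_eq_iff]
      exact ⟨by linarith, by push_cast; linarith⟩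
    have e2 : ⌊(⌊a⌋:ℝ) / 2⌋ = j := by
      rw [Int.floor_eq_iff]
      exact ⟨by linarith, by push_cast; linarith⟩
    rw [e1, e2]

lemma cubeOf_subset_succ {n : ℕ} (ℓ : ℤ) (x : EuclideanSpace ℝ (Fin n)) :
    cubeOf n ℓ x ⊆ cubeOf n (ℓ + 1) x := by
  intro y hy
  rw [mem_cubeOf_iff] at hy ⊢
  have hc : ∀ c : ℝ, c / (2:ℝ)^(ℓ+1) = (c / (2:ℝ)^ℓ) / 2 := by
    intro c
    rw [zpow_add_one₀ (two_ne_zero)]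
    ring
  intro i
  rw [hc (y i), hc (x i), floor_div_two' (y i / (2:ℝ)^ℓ), floor_div_two' (x i / (2:ℝ)^ℓ),
    hy i]

lemma cubeOf_subset_of_le {n : ℕ} (x : EuclideanSpace ℝ (Fin n)) {ℓ ℓ' : ℤ} (h : ℓ ≤ ℓ') :
    cubeOf n ℓ x ⊆ cubeOf n ℓ' x := by
  obtain ⟨k, rfl⟩ : ∃ k : ℕ, ℓ' = ℓ + k := ⟨(ℓ' - ℓ).toNat, by omega⟩
  clear h
  induction k with
  | zero => simp
  | succ k ih =>
    have e : ((k + 1 : ℕ) : ℤ) = (k : ℤ) + 1 := by push_cast; ring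
    rw [e, ← add_assoc]
    exact ih.trans (cubeOf_subset_succ _ x)

lemma dist_le_of_mem_dyadic {n : ℕ} {ℓ : ℤ} {m : Fin n → ℤ} {x y : EuclideanSpace ℝ (Fin n)}
    (hx : x ∈ dyadicCubeE n ℓ m) (hy : y ∈ dyadicCubeE n ℓ m) :
    dist x y ≤ Real.sqrt n * (2:ℝ) ^ ℓ := by
  have h2 : (0:ℝ) < (2:ℝ) ^ ℓ := by positivity
  rw [EuclideanSpace.dist_eq]
  have hb : ∀ i, dist (x i) (y i) ^ 2 ≤ ((2:ℝ)^ℓ)^2 := by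
    intro i
    obtain ⟨hx1, hx2⟩ := hx i
    obtain ⟨hy1, hy2⟩ := hy i
    have hexp : (2:ℝ)^ℓ * ((m i : ℝ) + 1) = 2^ℓ * (m i : ℝ) + 2^ℓ := by ring
    have habs : |x i - y i| ≤ (2:ℝ)^ℓ := by
      rw [abs_le]
      exact ⟨by linarith, by linarith⟩
    rw [Real.dist_eq]
    calc |x i - y i| ^ 2 = (x i - y i)^2 := sq_abs _
      _ ≤ ((2:ℝ)^ℓ)^2 := sq_le_sq' (by linarith [abs_le.1 habs]) (abs_le.1 habs).2
  calc Real.sqrt (∑ i, dist (x i) (y i) ^ 2)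
      ≤ Real.sqrt (∑ _i : Fin n, ((2:ℝ)^ℓ)^2) :=
        Real.sqrt_le_sqrt (Finset.sum_le_sum fun i _ => hb i)
    _ = Real.sqrt ((n : ℝ) * ((2:ℝ)^ℓ)^2) := by
        rw [Finset.sum_const, Finset.card_univ, Fintype.card_fin, nsmul_eq_mul]
    _ = Real.sqrt n * (2:ℝ)^ℓ := by
        rw [Real.sqrt_mul (by positivity), Real.sqrt_sq (le_of_lt h2)]

lemma setDist_le' {α : Type*} [MetricSpace α] {A B : Set α} {x y : α}
    (hx : x ∈ A) (hy : y ∈ B) : setDist A B ≤ dist x y := by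
  apply csInf_le
  · refine ⟨0, ?_⟩
    rintro d ⟨a, _, b, _, rfl⟩
    exact dist_nonneg
  · exact ⟨x, hx, y, hy, rfl⟩

lemma le_setDist' {α : Type*} [MetricSpace α] {A B : Set α} (hA : A.Nonempty) (hB : B.Nonempty)
    {c : ℝ} (h : ∀ x ∈ A, ∀ y ∈ B, c ≤ dist x y) : c ≤ setDist A B := by
  apply le_csInf
  · obtain ⟨x, hx⟩ := hA
    obtain ⟨y, hy⟩ := hB
    exact ⟨_, x, hx, y, hy, rfl⟩
  · rintro d ⟨a, ha, b, hb, rfl⟩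
    exact h a ha b hb

lemma setDist_anti' {α : Type*} [MetricSpace α] {A A' B : Set α} (h : A ⊆ A')
    (hA : A.Nonempty) (hB : B.Nonempty) : setDist A' B ≤ setDist A B := by
  apply csInf_le_csInf
  · refine ⟨0, ?_⟩
    rintro d ⟨a, _, b, _, rfl⟩
    exact dist_nonneg
  · obtain ⟨x, hx⟩ := hA
    obtain ⟨y, hy⟩ := hB
    exact ⟨_, x, hx, y, hy, rfl⟩
  · rintro d ⟨a, ha, b, hb, rfl⟩
    exact ⟨a, h ha, b, hb, rfl⟩

lemma le_infDist' {α : Type*} [MetricSpace α] {F : Set α} (hF : F.Nonempty) {x : α} {c : ℝ}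
    (h : ∀ y ∈ F, c ≤ dist x y) : c ≤ infDist x F := by
  by_contra hc
  push_neg at hc
  obtain ⟨y, hy, hlt⟩ := (infDist_lt_iff hF).1 hc
  exact absurd (h y hy) (not_le.2 hlt)

/-- The Whitney goodness predicate. -/
def IsGood (n : ℕ) (F : Set (EuclideanSpace ℝ (Fin n))) (ℓ : ℤ)
    (x : EuclideanSpace ℝ (Fin n)) : Prop :=
  Real.sqrt n * (2:ℝ)^ℓ ≤ setDist (cubeOf n ℓ x) F

lemma isGood_congr {n : ℕ} {F : Set (EuclideanSpace ℝ (Fin n))} {ℓ : ℤ}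
    {x z : EuclideanSpace ℝ (Fin n)} (hz : z ∈ cubeOf n ℓ x) :
    IsGood n F ℓ x ↔ IsGood n F ℓ z := by
  unfold IsGood
  rw [cubeOf_eq_of_mem hz]

lemma isGood_mono {n : ℕ} {F : Set (EuclideanSpace ℝ (Fin n))} (hF : F.Nonempty)
    (x : EuclideanSpace ℝ (Fin n)) {ℓ ℓ' : ℤ} (hle : ℓ ≤ ℓ') (h : IsGood n F ℓ' x) :
    IsGood n F ℓ x := by
  unfold IsGood at h ⊢
  have h1 : setDist (cubeOf n ℓ' x) F ≤ setDist (cubeOf n ℓ x) F :=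
    setDist_anti' (cubeOf_subset_of_le x hle) ⟨x, mem_cubeOf_self ℓ x⟩ hF
  have h2 : (2:ℝ)^ℓ ≤ (2:ℝ)^ℓ' := zpow_le_zpow_right₀ one_le_two hle
  have h3 : (0:ℝ) ≤ Real.sqrt n := Real.sqrt_nonneg _
  nlinarith

lemma coverage {n : ℕ} {F : Set (EuclideanSpace ℝ (Fin n))} (hF : F.Nonempty)
    (hFc : IsClosed F) (hn : 0 < n) {x : EuclideanSpace ℝ (Fin n)} (hx : x ∉ F) :
    ∃ ℓ : ℤ, IsGood n F ℓ x ∧ ¬ IsGood n F (ℓ + 1) x := by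
  have hs : 0 < Real.sqrt n := Real.sqrt_pos.2 (by exact_mod_cast hn)
  set s : ℝ := Real.sqrt n
  set d : ℝ := infDist x F with hd_def
  have hd : 0 < d := (hFc.notMem_iff_infDist_pos hF).1 hx
  have hsmall : ∃ ℓ0 : ℤ, IsGood n F ℓ0 x := by
    obtain ⟨k, hk⟩ := pow_unbounded_of_one_lt ((2 * s) / d) one_lt_two
    refine ⟨-(k : ℤ), ?_⟩
    have h2k : (0:ℝ) < 2 ^ k := by positivity
    have hkk : 2 * s * ((2:ℝ)^k)⁻¹ ≤ d := by
      rw [div_lt_iff₀ hd] at hk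
      rw [mul_inv_le_iff₀ h2k]
      nlinarith
    have hzpow : (2:ℝ) ^ (-(k:ℤ)) = ((2:ℝ)^k)⁻¹ := by
      rw [zpow_neg, zpow_natCast]
    unfold IsGood
    apply le_setDist' ⟨x, mem_cubeOf_self _ x⟩ hF
    intro y hy z hz
    have h1 : dist x y ≤ s * (2:ℝ) ^ (-(k:ℤ)) :=
      dist_le_of_mem_dyadic (mem_cubeOf_self _ x) hy
    have h2 : d ≤ dist x z := infDist_le_dist_of_mem hz
    have h3 : dist x z ≤ dist x y + dist y z := dist_triangle x y z
    rw [hzpow] at h1 ⊢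
    linarith
  have hbig : ∃ ℓ1 : ℤ, ¬ IsGood n F ℓ1 x := by
    obtain ⟨k, hk⟩ := pow_unbounded_of_one_lt (d / s) one_lt_two
    refine ⟨(k : ℤ), ?_⟩
    unfold IsGood
    rw [not_le]
    have h1 : setDist (cubeOf n (k:ℤ) x) F ≤ d := by
      apply le_infDist' hF
      intro y hy
      exact setDist_le' (mem_cubeOf_self _ x) hy
    have h2 : d < s * (2:ℝ)^(k:ℤ) := by
      rw [div_lt_iff₀ hs] at hk
      rw [zpow_natCast]
      nlinarith
    linarith
  obtain ⟨ℓ0, hℓ0⟩ := hsmall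
  obtain ⟨lb, hlb, hleast⟩ := Int.exists_least_of_bdd
    (P := fun ℓ => ¬ IsGood n F ℓ x)
    ⟨ℓ0 + 1, fun z hz => by
      by_contra hzz
      push_neg at hzz
      exact hz (isGood_mono hF x (by omega) hℓ0)⟩
    hbig
  refine ⟨lb - 1, ?_, by simpa using hlb⟩
  by_contra hbad
  have := hleast _ hbad
  omega

end WhitneyAux

open WhitneyAux

/-- Whitney decomposition of the complement of a nonempty closed set in `ℝⁿ`. -/
theorem whitney_decomposition (n : ℕ) (F : Set (EuclideanSpace ℝ (Fin n)))
    (hF : F.Nonempty) (hFc : IsClosed F) :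
    ∃ 𝒟 : Set (Set (EuclideanSpace ℝ (Fin n))),
      𝒟.Pairwise Disjoint ∧ Fᶜ = ⋃₀ 𝒟 ∧
      ∀ Q ∈ 𝒟, ∃ (ℓ : ℤ) (m : Fin n → ℤ), Q = dyadicCubeE n ℓ m ∧
        Real.sqrt n * (2 : ℝ) ^ ℓ ≤ setDist Q F ∧
        setDist Q F ≤ 4 * Real.sqrt n * (2 : ℝ) ^ ℓ := by
  rcases Nat.eq_zero_or_pos n with hn | hn
  · -- dimension zero: the space is a single point, `Fᶜ = ∅`
    subst hn
    refine ⟨∅, by simp [Set.pairwise_empty], ?_, by simp⟩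
    rw [Set.sUnion_empty]
    obtain ⟨z, hz⟩ := hF
    ext x
    have hxz : x = z := by ext i; exact i.elim0
    simp [hxz, hz]
  · have hs : 0 < Real.sqrt n := Real.sqrt_pos.2 (by exact_mod_cast hn)
    refine ⟨{Q | ∃ (ℓ : ℤ) (x : EuclideanSpace ℝ (Fin n)),
        Q = cubeOf n ℓ x ∧ IsGood n F ℓ x ∧ ¬ IsGood n F (ℓ + 1) x}, ?_, ?_, ?_⟩
    · -- pairwise disjoint
      have key : ∀ (ℓ₁ ℓ₂ : ℤ) (x₁ x₂ : EuclideanSpace ℝ (Fin n)), ℓ₁ ≤ ℓ₂ →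
          IsGood n F ℓ₁ x₁ → ¬ IsGood n F (ℓ₁ + 1) x₁ → IsGood n F ℓ₂ x₂ →
          cubeOf n ℓ₁ x₁ ≠ cubeOf n ℓ₂ x₂ →
          Disjoint (cubeOf n ℓ₁ x₁) (cubeOf n ℓ₂ x₂) := by
        intro ℓ₁ ℓ₂ x₁ x₂ hle h₁ h₁' h₂ hne
        rw [Set.disjoint_left]
        intro z hz₁ hz₂
        rcases eq_or_lt_of_le hle with rfl | hlt
        · exact hne ((cubeOf_eq_of_mem hz₁) ▸ (cubeOf_eq_of_mem hz₂) ▸ rfl)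
        · have hz₂' : IsGood n F ℓ₂ z := (isGood_congr hz₂).1 h₂
          have hzsucc : IsGood n F (ℓ₁ + 1) z := isGood_mono hF z (by omega) hz₂'
          have hzx : z ∈ cubeOf n (ℓ₁ + 1) x₁ := cubeOf_subset_succ ℓ₁ x₁ hz₁
          exact h₁' ((isGood_congr hzx).2 hzsucc)
      rintro Q₁ ⟨ℓ₁, x₁, rfl, h₁, h₁'⟩ Q₂ ⟨ℓ₂, x₂, rfl, h₂, h₂'⟩ hne
      rcases le_total ℓ₁ ℓ₂ with hle | hle
      · exact key ℓ₁ ℓ₂ x₁ x₂ hle h₁ h₁' h₂ hne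
      · exact (key ℓ₂ ℓ₁ x₂ x₁ hle h₂ h₂' h₁ (Ne.symm hne)).symm
    · -- union
      ext y
      simp only [Set.mem_compl_iff, Set.mem_sUnion, Set.mem_setOf_eq]
      constructor
      · intro hy
        obtain ⟨ℓ, hg, hb⟩ := coverage hF hFc hn hy
        exact ⟨cubeOf n ℓ y, ⟨ℓ, y, rfl, hg, hb⟩, mem_cubeOf_self ℓ y⟩
      · rintro ⟨Q, ⟨ℓ, x, rfl, hg, _⟩, hyQ⟩ hyF
        have h1 : setDist (cubeOf n ℓ x) F ≤ dist y y := setDist_le' hyQ hyF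
        rw [dist_self] at h1
        have h2 : (0:ℝ) < Real.sqrt n * 2^ℓ := by positivity
        have hg' : Real.sqrt n * (2:ℝ)^ℓ ≤ setDist (cubeOf n ℓ x) F := hg
        linarith
    · -- the distance bounds
      rintro Q ⟨ℓ, x, rfl, hg, hb⟩
      refine ⟨ℓ, fun i => ⌊x i / (2:ℝ)^ℓ⌋, rfl, hg, ?_⟩
      have hb' : setDist (cubeOf n (ℓ+1) x) F < Real.sqrt n * (2:ℝ)^(ℓ+1) :=
        not_le.1 hb
      have hup : setDist (cubeOf n ℓ x) F ≤
          setDist (cubeOf n (ℓ+1) x) F + Real.sqrt n * (2:ℝ)^(ℓ+1) := by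
        have key : setDist (cubeOf n ℓ x) F - Real.sqrt n * (2:ℝ)^(ℓ+1) ≤
            setDist (cubeOf n (ℓ+1) x) F := by
          apply le_setDist' ⟨x, mem_cubeOf_self _ x⟩ hF
          intro y hy z hz
          have h1 : dist x y ≤ Real.sqrt n * (2:ℝ)^(ℓ+1) :=
            dist_le_of_mem_dyadic (mem_cubeOf_self (ℓ+1) x) hy
          have h2 : setDist (cubeOf n ℓ x) F ≤ dist x z :=
            setDist_le' (mem_cubeOf_self ℓ x) hz
          have h3 : dist x z ≤ dist x y + dist y z := dist_triangle x y z
          linarith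
        linarith
      have hzp : (2:ℝ)^(ℓ+1) = 2^ℓ * 2 := zpow_add_one₀ two_ne_zero ℓ
      rw [hzp] at hup hb'
      calc setDist (cubeOf n ℓ x) F
          ≤ setDist (cubeOf n (ℓ+1) x) F + Real.sqrt n * ((2:ℝ)^ℓ * 2) := hup
        _ ≤ 4 * Real.sqrt n * (2:ℝ)^ℓ := by linarith
end

section
/- Let x ∈ ℝⁿ \ F for a nonempty closed set F ⊆ ℝⁿ, and let ℓ ∈ ℤ be the unique integer with √n·2^ℓ < dist(x, F) ≤ √n·2^{ℓ+1}. Then the dyadic cube Q of side length 2^{ℓ−1} containing x satisfies √n·L_Q ≤ dist(Q, F) ≤ 4√n·L_Q. -/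
open Set Metric

lemma cube_diam (n : ℕ) (k : ℤ) (m : Fin n → ℤ) {y z : EuclideanSpace ℝ (Fin n)}
    (hy : y ∈ dyadicCubeE n k m) (hz : z ∈ dyadicCubeE n k m) :
    dist y z ≤ Real.sqrt n * 2 ^ k := by
  have hL : (0 : ℝ) < 2 ^ k := zpow_pos (by norm_num) k
  rw [EuclideanSpace.dist_eq]
  have hb : ∀ i, dist (y i) (z i) ^ 2 ≤ ((2 : ℝ) ^ k) ^ 2 := by
    intro i
    have h1 := hy i; have h2 := hz i
    rw [Real.dist_eq]
    have habs : |y i - z i| ≤ 2 ^ k := by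
      rw [abs_le]; constructor <;> nlinarith [h1.1, h1.2, h2.1, h2.2]
    nlinarith [abs_nonneg (y i - z i), sq_abs (y i - z i)]
  calc Real.sqrt (∑ i, dist (y i) (z i) ^ 2)
      ≤ Real.sqrt (∑ _i : Fin n, ((2 : ℝ) ^ k) ^ 2) :=
        Real.sqrt_le_sqrt (Finset.sum_le_sum fun i _ => hb i)
    _ = Real.sqrt n * 2 ^ k := by
        rw [Finset.sum_const, Finset.card_univ, Fintype.card_fin, nsmul_eq_mul,
          Real.sqrt_mul (by positivity), Real.sqrt_sq hL.le]

theorem whitney_key_step (n : ℕ) (F : Set (EuclideanSpace ℝ (Fin n)))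
    (hF : F.Nonempty) (hFc : IsClosed F)
    (x : EuclideanSpace ℝ (Fin n)) (hx : x ∉ F) (ℓ : ℤ)
    (h1 : Real.sqrt n * (2 : ℝ) ^ ℓ < infDist x F)
    (h2 : infDist x F ≤ Real.sqrt n * (2 : ℝ) ^ (ℓ + 1))
    (m : Fin n → ℤ) (hxQ : x ∈ dyadicCubeE n (ℓ - 1) m) :
    Real.sqrt n * (2 : ℝ) ^ (ℓ - 1) ≤ setDist (dyadicCubeE n (ℓ - 1) m) F ∧
    setDist (dyadicCubeE n (ℓ - 1) m) F ≤ 4 * Real.sqrt n * (2 : ℝ) ^ (ℓ - 1) := by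
  set S := {d : ℝ | ∃ a ∈ dyadicCubeE n (ℓ - 1) m, ∃ b ∈ F, d = dist a b} with hS
  have hbdd : BddBelow S := ⟨0, by rintro d ⟨a, _, b, _, rfl⟩; exact dist_nonneg⟩
  have hpow1 : (2 : ℝ) ^ ℓ = 2 * 2 ^ (ℓ - 1) := by
    rw [show ℓ = (ℓ - 1) + 1 by ring, zpow_add₀ (two_ne_zero)]; ring
  have hpow2 : (2 : ℝ) ^ (ℓ + 1) = 4 * 2 ^ (ℓ - 1) := by
    rw [show ℓ + 1 = (ℓ - 1) + 2 by ring, zpow_add₀ (two_ne_zero)]; norm_num; ring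
  constructor
  · apply le_csInf
    · obtain ⟨b, hb⟩ := hF
      exact ⟨dist x b, x, hxQ, b, hb, rfl⟩
    · rintro d ⟨a, ha, b, hb, rfl⟩
      have hinf : infDist x F ≤ dist x b := infDist_le_dist_of_mem hb
      have htri : dist x b ≤ dist x a + dist a b := dist_triangle x a b
      have hxa : dist x a ≤ Real.sqrt n * 2 ^ (ℓ - 1) := cube_diam n (ℓ - 1) m hxQ ha
      rw [hpow1] at h1
      linarith
  · obtain ⟨b, hb, hbd⟩ := hFc.exists_infDist_eq_dist hF x
    have : dist x b ∈ S := ⟨x, hxQ, b, hb, rfl⟩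
    calc setDist (dyadicCubeE n (ℓ - 1) m) F ≤ dist x b := csInf_le hbdd this
      _ = infDist x F := hbd.symm
      _ ≤ 4 * Real.sqrt n * (2 : ℝ) ^ (ℓ - 1) := by rw [hpow2] at h2; linarith
end

section
/- Let (X, {Q_x}ₓ, μ) be an abstract Hardy–Littlewood system (each Q ∈ Q_x contains x, and 0 < μ(Q) < ∞ for all Q ∈ Q = ⋃ₓ Q_x). Assume: (HL3) for every sequence (Qₙ) of pairwise disjoint members of Q with infₙ μ(Qₙ) > 0 one has μ(⋃ₙ Qₙ) = ∞; and (HL4) there exist constants c > 0 and λ > 1 such that for every Q ∈ Q, μ(Q̃) ≤ c·μ(Q), where Q̃ := ⋃{R ∈ Q : R ∩ Q ≠ ∅, μ(R) ≤ λ·μ(Q)}. Then for every set function F : Q → [0,∞] and every r > 0, μ{x ∈ X : sup_{Q∈Q_x} F(Q)/μ(Q) > r} ≤ c·r⁻¹·‖F‖_Q. -/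
open Set MeasureTheory ENNReal

/-- The norm `‖F‖_𝒬`: supremum of finite sums of `F` over pairwise disjoint members of `𝒬`. -/
noncomputable def hlNorm {X : Type*} (𝒬 : Set (Set X)) (F : Set X → ℝ≥0∞) : ℝ≥0∞ :=
  ⨆ s : {s : Finset (Set X) // ↑s ⊆ 𝒬 ∧ (s : Set (Set X)).Pairwise Disjoint}, ∑ Q ∈ s.1, F Q

/-- The abstract maximal function `M F(x) = sup_{Q ∈ 𝒬ₓ} F(Q)/μ(Q)`. -/
noncomputable def hlMax {X : Type*} (Qx : X → Set (Set X)) (μ : Set X → ℝ≥0∞)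
    (F : Set X → ℝ≥0∞) (x : X) : ℝ≥0∞ :=
  ⨆ Q ∈ Qx x, F Q / μ Q


section HLAux
variable {X : Type*}

lemma hl_exists_maximal_disjoint {X : Type*} (𝒜 : Set (Set X)) :
    ∃ M, M ⊆ 𝒜 ∧ M.Pairwise Disjoint ∧ ∀ Q ∈ 𝒜, (∀ G ∈ M, Disjoint Q G) → Q ∈ M := by
  have hch : ∀ c ⊆ {T : Set (Set X) | T ⊆ 𝒜 ∧ T.Pairwise Disjoint},
      IsChain (· ⊆ ·) c → ∃ ub ∈ {T : Set (Set X) | T ⊆ 𝒜 ∧ T.Pairwise Disjoint},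
        ∀ s ∈ c, s ⊆ ub := by
    intro c hcS hc
    refine ⟨⋃₀ c, ⟨?_, ?_⟩, fun s hs => subset_sUnion_of_mem hs⟩
    · exact sUnion_subset fun T hT => (hcS hT).1
    · intro A hA B hB hAB
      obtain ⟨T₁, hT₁, hA⟩ := hA
      obtain ⟨T₂, hT₂, hB⟩ := hB
      rcases hc.total hT₁ hT₂ with h | h
      · exact (hcS hT₂).2 (h hA) hB hAB
      · exact (hcS hT₁).2 hA (h hB) hAB
  obtain ⟨M, hM⟩ := zorn_subset {T : Set (Set X) | T ⊆ 𝒜 ∧ T.Pairwise Disjoint} hch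
  refine ⟨M, hM.prop.1, hM.prop.2, fun Q hQ hdisj => ?_⟩
  by_contra hQM
  have hins : insert Q M ∈ {T : Set (Set X) | T ⊆ 𝒜 ∧ T.Pairwise Disjoint} := by
    constructor
    · exact insert_subset hQ hM.prop.1
    · exact (Set.pairwise_insert_of_symmetric).2
        ⟨hM.prop.2, fun G hG _ => hdisj G hG⟩
  have h2 := hM.2 hins (subset_insert _ _)
  exact hQM (h2 (mem_insert _ _))

/-- A choice of a maximal pairwise disjoint subfamily. -/
noncomputable def hlMaxDisj (𝒜 : Set (Set X)) : Set (Set X) :=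
  (hl_exists_maximal_disjoint 𝒜).choose

lemma hlMaxDisj_subset (𝒜 : Set (Set X)) : hlMaxDisj 𝒜 ⊆ 𝒜 :=
  (hl_exists_maximal_disjoint 𝒜).choose_spec.1

lemma hlMaxDisj_pairwise (𝒜 : Set (Set X)) : (hlMaxDisj 𝒜).Pairwise Disjoint :=
  (hl_exists_maximal_disjoint 𝒜).choose_spec.2.1

lemma hlMaxDisj_maximal (𝒜 : Set (Set X)) :
    ∀ Q ∈ 𝒜, (∀ G ∈ hlMaxDisj 𝒜, Disjoint Q G) → Q ∈ hlMaxDisj 𝒜 :=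
  (hl_exists_maximal_disjoint 𝒜).choose_spec.2.2

/-- Greedy scale-by-scale selection: first component is the family selected at scale `k`,
second component is the union of all families selected at scales `≤ k`. -/
noncomputable def hlAux (B : ℕ → Set (Set X)) : ℕ → Set (Set X) × Set (Set X)
  | 0 => (hlMaxDisj (B 0), hlMaxDisj (B 0))
  | (k+1) =>
      let acc := (hlAux B k).2
      let M := hlMaxDisj {Q ∈ B (k+1) | ∀ R ∈ acc, Disjoint Q R}
      (M, acc ∪ M)

lemma hlAux_succ_fst (B : ℕ → Set (Set X)) (k : ℕ) :
    (hlAux B (k+1)).1 = hlMaxDisj {Q ∈ B (k+1) | ∀ R ∈ (hlAux B k).2, Disjoint Q R} := rfl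

lemma hlAux_succ_snd (B : ℕ → Set (Set X)) (k : ℕ) :
    (hlAux B (k+1)).2 = (hlAux B k).2 ∪ (hlAux B (k+1)).1 := rfl

lemma hlAux_fst_subset (B : ℕ → Set (Set X)) (k : ℕ) : (hlAux B k).1 ⊆ B k := by
  cases k with
  | zero => exact hlMaxDisj_subset _
  | succ k =>
      rw [hlAux_succ_fst]
      exact (hlMaxDisj_subset _).trans (sep_subset _ _)

lemma hlAux_fst_subset_snd (B : ℕ → Set (Set X)) (k : ℕ) : (hlAux B k).1 ⊆ (hlAux B k).2 := by
  cases k with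
  | zero => exact subset_rfl
  | succ k => rw [hlAux_succ_snd]; exact subset_union_right

lemma hlAux_snd_mono (B : ℕ → Set (Set X)) {j k : ℕ} (h : j ≤ k) :
    (hlAux B j).2 ⊆ (hlAux B k).2 := by
  induction k with
  | zero => simp [Nat.le_zero.1 h]
  | succ k ih =>
      rcases Nat.le_succ_iff.1 h with h' | h'
      · exact (ih h').trans subset_union_left
      · subst h'; exact subset_rfl

lemma hlAux_snd_eq_iUnion (B : ℕ → Set (Set X)) (k : ℕ) :
    (hlAux B k).2 = ⋃ j ∈ Finset.range (k+1), (hlAux B j).1 := by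
  induction k with
  | zero => simp [hlAux]
  | succ k ih =>
      rw [hlAux_succ_snd, ih]
      ext R
      simp only [mem_union, mem_iUnion, Finset.mem_range]
      constructor
      · rintro (⟨j, hj, hR⟩ | hR)
        · exact ⟨j, by omega, hR⟩
        · exact ⟨k+1, by omega, hR⟩
      · rintro ⟨j, hj, hR⟩
        rcases Nat.lt_succ_iff_lt_or_eq.1 hj with h | rfl
        · exact Or.inl ⟨j, h, hR⟩
        · exact Or.inr hR

lemma hlAux_snd_pairwise (B : ℕ → Set (Set X)) (k : ℕ) :
    ((hlAux B k).2).Pairwise Disjoint := by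
  induction k with
  | zero => exact hlMaxDisj_pairwise _
  | succ k ih =>
      rw [hlAux_succ_snd, hlAux_succ_fst]
      refine (Set.pairwise_union_of_symmetric).2
        ⟨ih, hlMaxDisj_pairwise _, fun a ha b hb _ => ?_⟩
      exact ((hlMaxDisj_subset _ hb).2 a ha).symm

lemma hlAux_maximal (B : ℕ → Set (Set X)) (k : ℕ) :
    ∀ Q ∈ B k, (∀ R ∈ (hlAux B k).2, Disjoint Q R) → Q ∈ (hlAux B k).1 := by
  cases k with
  | zero => exact hlMaxDisj_maximal _
  | succ k =>
      intro Q hQ hdisj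
      rw [hlAux_succ_fst]
      refine hlMaxDisj_maximal _ Q ⟨hQ, fun R hR => ?_⟩ (fun G hG => ?_)
      · exact hdisj R (hlAux_snd_mono B (Nat.le_succ k) hR)
      · refine hdisj G ?_
        rw [hlAux_succ_snd, hlAux_succ_fst]
        exact subset_union_right hG

lemma hl_finite_of_sum_le {α : Type*} {𝒢 : Set α} {F : α → ℝ≥0∞} {a N : ℝ≥0∞}
    (ha : 0 < a) (hN : N ≠ ⊤) (hF : ∀ G ∈ 𝒢, a ≤ F G)
    (hsum : ∀ T : Finset α, ↑T ⊆ 𝒢 → ∑ G ∈ T, F G ≤ N) : 𝒢.Finite := by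
  by_contra h
  have hinf : 𝒢.Infinite := h
  obtain ⟨n, hn⟩ : ∃ n : ℕ, N < n * a := by
    rcases eq_or_ne a ⊤ with rfl | hatop
    · exact ⟨1, by simpa using hN.lt_top⟩
    · obtain ⟨n, hn⟩ := ENNReal.exists_nat_gt (r := N / a) (ENNReal.div_lt_top hN ha.ne').ne
      exact ⟨n, (ENNReal.div_lt_iff (Or.inl ha.ne') (Or.inl hatop)).1 hn⟩
  obtain ⟨t, hts, htf, htc⟩ := hinf.exists_subset_ncard_eq n
  have hsum' := hsum htf.toFinset (by simpa using hts)
  have hlow : (n : ℝ≥0∞) * a ≤ ∑ G ∈ htf.toFinset, F G := by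
    calc (n : ℝ≥0∞) * a = htf.toFinset.card • a := by
          rw [nsmul_eq_mul]
          congr 1
          rw [← htc, Set.ncard_eq_toFinset_card _ htf]
        _ ≤ ∑ G ∈ htf.toFinset, F G :=
          Finset.card_nsmul_le_sum _ _ _ (fun x hx => hF x (hts (htf.mem_toFinset.1 hx)))
  exact absurd (hlow.trans hsum') (not_le.2 hn)

end HLAux

theorem abstract_hl_maximal_inequality {X : Type*}
    (Qx : X → Set (Set X)) (μ : MeasureTheory.OuterMeasure X)
    (hne : ∀ x, (Qx x).Nonempty) (hmem : ∀ x, ∀ Q ∈ Qx x, x ∈ Q)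
    (hfin : ∀ Q ∈ ⋃ x, Qx x, 0 < μ Q ∧ μ Q < ∞)
    (hHL3 : ∀ Q : ℕ → Set X, (∀ n, Q n ∈ ⋃ x, Qx x) →
      Pairwise (Function.onFun Disjoint Q) → 0 < ⨅ n, μ (Q n) → μ (⋃ n, Q n) = ∞)
    (c : ℝ≥0∞) (hc : 0 < c) (lam : ℝ≥0∞) (hlam : 1 < lam)
    (hHL4 : ∀ Q ∈ ⋃ x, Qx x,
      μ (⋃₀ {R | R ∈ ⋃ x, Qx x ∧ (R ∩ Q).Nonempty ∧ μ R ≤ lam * μ Q}) ≤ c * μ Q) :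
    ∀ F : Set X → ℝ≥0∞, ∀ r : ℝ≥0∞, 0 < r → r ≠ ⊤ →
      μ {x | r < hlMax Qx (μ ·) F x} ≤ c * r⁻¹ * hlNorm (⋃ x, Qx x) F := by
  intro F r hr hrt
  classical
  set 𝒬 : Set (Set X) := ⋃ x, Qx x with h𝒬
  set N : ℝ≥0∞ := hlNorm 𝒬 F with hNdef
  -- trivial case `N = ⊤`
  rcases eq_or_ne N ⊤ with hN | hN
  · rw [hN, ENNReal.mul_top (mul_ne_zero hc.ne' (ENNReal.inv_ne_zero.2 hrt))]
    exact le_top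
  -- finite sums of `F` over disjoint subfamilies of `𝒬` are bounded by `N`
  have hsumle : ∀ T : Finset (Set X), ↑T ⊆ 𝒬 → (T : Set (Set X)).Pairwise Disjoint →
      ∑ Q ∈ T, F Q ≤ N := by
    intro T hT1 hT2
    exact le_iSup (fun s : {s : Finset (Set X) // ↑s ⊆ 𝒬 ∧ (s : Set (Set X)).Pairwise Disjoint}
      => ∑ Q ∈ s.1, F Q) ⟨T, hT1, hT2⟩
  -- the basic family
  set ℬ : Set (Set X) := {Q | Q ∈ 𝒬 ∧ r * μ Q < F Q} with hℬdef
  have hEB : {x | r < hlMax Qx (μ ·) F x} ⊆ ⋃₀ ℬ := by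
    intro x hx
    rw [mem_setOf_eq, hlMax, lt_iSup_iff] at hx
    obtain ⟨Q, hQ⟩ := hx
    rw [lt_iSup_iff] at hQ
    obtain ⟨hQx, hQ⟩ := hQ
    have hQ𝒬 : Q ∈ 𝒬 := mem_iUnion.2 ⟨x, hQx⟩
    have hμQ := hfin Q hQ𝒬
    have : r * μ Q < F Q :=
      (ENNReal.lt_div_iff_mul_lt (Or.inl hμQ.1.ne') (Or.inl hμQ.2.ne)).1 hQ
    exact ⟨Q, ⟨hQ𝒬, this⟩, hmem x Q hQx⟩
  rcases Set.eq_empty_or_nonempty ℬ with hBe | ⟨Q₀, hQ₀⟩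
  · have : μ {x | r < hlMax Qx (μ ·) F x} ≤ μ (∅ : Set X) := by
      refine measure_mono ?_
      rwa [hBe, sUnion_empty] at hEB
    have : μ {x | r < hlMax Qx (μ ·) F x} ≤ 0 := this.trans (le_of_eq measure_empty)
    exact this.trans zero_le
  have hBsub : ℬ ⊆ 𝒬 := fun Q hQ => hQ.1
  have hFmaj : ∀ Q ∈ ℬ, μ Q ≤ F Q / r := by
    intro Q hQ
    exact (ENNReal.le_div_iff_mul_le (Or.inl hr.ne') (Or.inl hrt)).2
      (by rw [mul_comm]; exact hQ.2.le)
  -- the top scale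
  set s : ℝ≥0∞ := N / r with hsdef
  have hstop : s ≠ ⊤ := (ENNReal.div_lt_top hN hr.ne').ne
  have hμs : ∀ Q ∈ ℬ, μ Q ≤ s := by
    intro Q hQ
    refine (hFmaj Q hQ).trans ?_
    have hFN : F Q ≤ N := by
      have := hsumle {Q} (by simpa using hQ.1) (by simp)
      simpa using this
    exact ENNReal.div_le_div_right hFN r
  have hspos : 0 < s := lt_of_lt_of_le (hfin Q₀ hQ₀.1).1 (hμs Q₀ hQ₀)
  -- the dilation factor, truncated to be finite
  set L : ℝ≥0∞ := min lam 2 with hLdef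
  have hL1 : 1 < L := lt_min hlam one_lt_two
  have hLtop : L ≠ ⊤ := ((min_le_right lam 2).trans_lt (by norm_num)).ne
  have hL0 : L ≠ 0 := (zero_lt_one.trans hL1).ne'
  have hpow0 : ∀ k : ℕ, L ^ k ≠ 0 := fun k => pow_ne_zero k hL0
  have hpowtop : ∀ k : ℕ, L ^ k ≠ ⊤ := fun k => ENNReal.pow_ne_top hLtop
  -- the scales
  set B : ℕ → Set (Set X) := fun k => {Q ∈ ℬ | s / L ^ (k+1) < μ Q ∧ μ Q ≤ s / L ^ k}
    with hBdef
  have hscale : ∀ Q ∈ ℬ, ∃ k, Q ∈ B k := by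
    intro Q hQ
    have hμQ := hfin Q hQ.1
    have hex : ∃ n : ℕ, s / L ^ (n+1) < μ Q := by
      have htd : Filter.Tendsto (fun n : ℕ => L ^ n) Filter.atTop (nhds ⊤) :=
        ENNReal.tendsto_pow_atTop_nhds_top_iff.2 hL1
      have hlt : s / μ Q < ⊤ := ENNReal.div_lt_top hstop hμQ.1.ne'
      obtain ⟨n, hn⟩ := (htd.eventually (lt_mem_nhds hlt)).exists
      refine ⟨n, ?_⟩
      have hs' : s < μ Q * L ^ (n+1) := by
        have h1 : s < μ Q * L ^ n := by
          rw [mul_comm]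
          exact (ENNReal.div_lt_iff (Or.inl hμQ.1.ne') (Or.inl hμQ.2.ne)).1 hn
        refine h1.trans_le (mul_le_mul_right ?_ _)
        rw [pow_succ]
        exact le_mul_of_one_le_right' hL1.le
      exact (ENNReal.div_lt_iff (Or.inl (hpow0 (n+1))) (Or.inl (hpowtop (n+1)))).2 hs'
    classical
    refine ⟨Nat.find hex, hQ, Nat.find_spec hex, ?_⟩
    rcases Nat.eq_zero_or_pos (Nat.find hex) with hk0 | hkpos
    · rw [hk0, pow_zero, div_one]
      exact hμs Q hQ
    · have h' := not_lt.1 (Nat.find_min hex (show Nat.find hex - 1 < Nat.find hex by omega))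
      have he : Nat.find hex - 1 + 1 = Nat.find hex := by omega
      rwa [he] at h'
  -- the selected family
  set 𝒢 : Set (Set X) := ⋃ k, (hlAux B k).1 with h𝒢def
  have h𝒢B : ∀ k, (hlAux B k).1 ⊆ ℬ := fun k => (hlAux_fst_subset B k).trans (sep_subset _ _)
  have h𝒢sub : 𝒢 ⊆ ℬ := iUnion_subset h𝒢B
  have haccsub : ∀ k, (hlAux B k).2 ⊆ 𝒢 := by
    intro k R hR
    rw [hlAux_snd_eq_iUnion] at hR
    simp only [mem_iUnion, Finset.mem_range] at hR
    obtain ⟨j, _, hR⟩ := hR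
    exact mem_iUnion.2 ⟨j, hR⟩
  have h𝒢pd : 𝒢.Pairwise Disjoint := by
    intro G hG G' hG' hne'
    obtain ⟨j, hj⟩ := mem_iUnion.1 hG
    obtain ⟨k, hk⟩ := mem_iUnion.1 hG'
    rcases le_total j k with h | h
    · exact hlAux_snd_pairwise B k
        (hlAux_snd_mono B h (hlAux_fst_subset_snd B j hj)) (hlAux_fst_subset_snd B k hk) hne'
    · exact hlAux_snd_pairwise B j
        (hlAux_fst_subset_snd B j hj) (hlAux_snd_mono B h (hlAux_fst_subset_snd B k hk)) hne'
  -- each scale family is finite, so `𝒢` is countable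
  have h𝒢cnt : 𝒢.Countable := by
    refine countable_iUnion fun k => Set.Finite.countable ?_
    refine hl_finite_of_sum_le (F := F) (a := r * (s / L ^ (k+1))) (N := N)
      (ENNReal.mul_pos hr.ne' (ENNReal.div_pos hspos.ne' (hpowtop (k+1))).ne') hN ?_ ?_
    · intro G hG
      have hGB : G ∈ B k := hlAux_fst_subset B k hG
      calc r * (s / L ^ (k+1)) ≤ r * μ G := mul_le_mul_right hGB.2.1.le r
        _ ≤ F G := hGB.1.2.le
    · intro T hT
      refine hsumle T (fun Q hQ => (hBsub (h𝒢B k (hT hQ)))) ?_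
      exact h𝒢pd.mono fun Q hQ => mem_iUnion.2 ⟨k, hT hQ⟩
  -- arithmetic on the scales
  have hLdiv : ∀ k : ℕ, s / L ^ k = L * (s / L ^ (k+1)) := by
    intro k
    rw [div_eq_mul_inv, div_eq_mul_inv, pow_succ,
      ENNReal.mul_inv (Or.inl (hpow0 k)) (Or.inl (hpowtop k))]
    calc s * (L ^ k)⁻¹ = s * (L ^ k)⁻¹ * (L * L⁻¹) := by
          rw [ENNReal.mul_inv_cancel hL0 hLtop, mul_one]
      _ = L * (s * ((L ^ k)⁻¹ * L⁻¹)) := by ring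
  have hanti : ∀ {j k : ℕ}, j ≤ k → s / L ^ k ≤ s / L ^ j := by
    intro j k h
    exact ENNReal.div_le_div_left (pow_le_pow_right' hL1.le h) s
  -- the Vitali covering property
  have hV : ∀ Q ∈ ℬ, ∃ G ∈ 𝒢, (Q ∩ G).Nonempty ∧ μ Q ≤ L * μ G := by
    intro Q hQ
    by_contra hcon
    push_neg at hcon
    obtain ⟨k, hQk⟩ := hscale Q hQ
    have hdisj : ∀ R ∈ (hlAux B k).2, Disjoint Q R := by
      intro R hR
      rw [hlAux_snd_eq_iUnion] at hR
      simp only [mem_iUnion, Finset.mem_range] at hR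
      obtain ⟨j, hjk, hRj⟩ := hR
      have hR𝒢 : R ∈ 𝒢 := mem_iUnion.2 ⟨j, hRj⟩
      have hRB : R ∈ B j := hlAux_fst_subset B j hRj
      have hμQR : μ Q ≤ L * μ R := by
        calc μ Q ≤ s / L ^ k := hQk.2.2
          _ = L * (s / L ^ (k+1)) := hLdiv k
          _ ≤ L * (s / L ^ (j+1)) := mul_le_mul_right (hanti (by omega)) L
          _ ≤ L * μ R := mul_le_mul_right hRB.2.1.le L
      have := hcon R hR𝒢
      rw [Set.disjoint_iff_inter_eq_empty, ← not_nonempty_iff_eq_empty]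
      intro hne'
      exact absurd hμQR (by simpa using (this hne'))
    have hQ𝒢 : Q ∈ 𝒢 := mem_iUnion.2 ⟨k, hlAux_maximal B k Q hQk hdisj⟩
    obtain ⟨x, hx⟩ := mem_iUnion.1 hQ.1
    have hQne : (Q ∩ Q).Nonempty := by
      rw [inter_self]; exact ⟨x, hmem x Q hx⟩
    have : μ Q ≤ L * μ Q := le_mul_of_one_le_left zero_le hL1.le
    exact absurd this (by simpa using hcon Q hQ𝒢 hQne)
  -- the enlargement of a set
  set tl : Set X → Set X := fun G => ⋃₀ {R | R ∈ 𝒬 ∧ (R ∩ G).Nonempty ∧ μ R ≤ L * μ G}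
    with htldef
  have hcover : {x | r < hlMax Qx (μ ·) F x} ⊆ ⋃ G ∈ 𝒢, tl G := by
    intro x hx
    obtain ⟨Q, hQ, hxQ⟩ := hEB hx
    obtain ⟨G, hG, hQG, hμQG⟩ := hV Q hQ
    exact mem_biUnion hG ⟨Q, ⟨hQ.1, hQG, hμQG⟩, hxQ⟩
  have htl : ∀ G ∈ 𝒢, μ (tl G) ≤ c * μ G := by
    intro G hG
    have hG𝒬 : G ∈ 𝒬 := hBsub (h𝒢sub hG)
    refine le_trans (measure_mono ?_) (hHL4 G hG𝒬)
    refine sUnion_mono fun R hR => ?_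
    exact ⟨hR.1, hR.2.1, hR.2.2.trans (mul_le_mul_left (min_le_left lam 2) (μ G))⟩
  -- summing up
  have htsum : ∑' G : 𝒢, F (G : Set X) ≤ N := by
    rw [ENNReal.tsum_eq_iSup_sum]
    refine iSup_le fun T => ?_
    have heq : ∑ G ∈ T, F (G : Set X) = ∑ Q ∈ T.image Subtype.val, F Q :=
      (Finset.sum_image (fun x _ y _ h => Subtype.val_injective h)).symm
    rw [heq]
    refine hsumle _ (fun Q hQ => ?_) ?_
    · simp only [Finset.coe_image, mem_image] at hQ
      obtain ⟨⟨G, hG⟩, _, rfl⟩ := hQ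
      exact hBsub (h𝒢sub hG)
    · refine h𝒢pd.mono fun Q hQ => ?_
      simp only [Finset.coe_image, mem_image] at hQ
      obtain ⟨⟨G, hG⟩, _, rfl⟩ := hQ
      exact hG
  calc μ {x | r < hlMax Qx (μ ·) F x} ≤ μ (⋃ G ∈ 𝒢, tl G) := measure_mono hcover
    _ ≤ ∑' G : 𝒢, μ (tl G) := measure_biUnion_le μ h𝒢cnt tl
    _ ≤ ∑' G : 𝒢, c * r⁻¹ * F (G : Set X) := by
        refine ENNReal.tsum_le_tsum fun G => ?_
        have h1 : μ (tl G) ≤ c * μ (G : Set X) := htl G G.2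
        have h2 : μ (G : Set X) ≤ r⁻¹ * F (G : Set X) := by
          rw [← ENNReal.div_eq_inv_mul]
          exact hFmaj G (h𝒢sub G.2)
        calc μ (tl G) ≤ c * μ (G : Set X) := h1
          _ ≤ c * (r⁻¹ * F (G : Set X)) := mul_le_mul_right h2 c
          _ = c * r⁻¹ * F (G : Set X) := by rw [mul_assoc]
    _ = c * r⁻¹ * ∑' G : 𝒢, F (G : Set X) := ENNReal.tsum_mul_left
    _ ≤ c * r⁻¹ * N := mul_le_mul_right htsum _
end

section
/- Let (X, d, μ) be a space of homogeneous type with quasimetric constant K and doubling constants α, β > 1 (μ(αB) ≤ β μ(B) for all balls B), and let m be the smallest natural number with α^m ≥ 2K(4K²+1). Then for every f ∈ L¹(μ) and every r > 0, μ{x ∈ X : M f(x) > r} ≤ r⁻¹ β^m ‖f‖_{L¹(μ)}, where M f(x) := sup over open balls Q containing x of (1/μ(Q)) ∫_Q |f| dμ. -/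
open Set MeasureTheory ENNReal

/-- The open ball of a quasimetric `d`. -/
def qball {X : Type*} (d : X → X → ℝ) (c : X) (ρ : ℝ) : Set X := {y | d c y < ρ}

theorem homogeneous_hl_maximal_inequality {X : Type*} [MeasurableSpace X]
    (d : X → X → ℝ) (K : ℝ) (hK : 1 ≤ K)
    (hd_eq : ∀ x y, d x y = 0 ↔ x = y) (hd_symm : ∀ x y, d x y = d y x)
    (hd_tri : ∀ x y z, d x z ≤ K * (d x y + d y z))
    (μ : MeasureTheory.Measure X) (α β : ℝ) (hα : 1 < α) (hβ : 1 < β)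
    (hmeas : ∀ c ρ, 0 < ρ → MeasurableSet (qball d c ρ))
    (hball : ∀ c ρ, 0 < ρ → 0 < μ (qball d c ρ) ∧ μ (qball d c ρ) < ∞)
    (hdouble : ∀ c ρ, 0 < ρ → μ (qball d c (α * ρ)) ≤ ENNReal.ofReal β * μ (qball d c ρ))
    (m : ℕ) (hm : 2 * K * (4 * K ^ 2 + 1) ≤ α ^ m)
    (hm_min : ∀ k : ℕ, k < m → α ^ k < 2 * K * (4 * K ^ 2 + 1))
    (f : X → ℂ) (hf : MeasureTheory.Integrable f μ) :
    ∀ r : ℝ≥0∞, 0 < r → r ≠ ⊤ →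
      μ {x | r < ⨆ B ∈ {B : Set X | (∃ c ρ, 0 < ρ ∧ B = qball d c ρ) ∧ x ∈ B},
          (∫⁻ y in B, ‖f y‖₊ ∂μ) / μ B} ≤
        r⁻¹ * (ENNReal.ofReal β) ^ m * ∫⁻ y, ‖f y‖₊ ∂μ := by
  intro r hr0 hrtop
  have hK0 : (0 : ℝ) < K := lt_of_lt_of_le one_pos hK
  have hα0 : (0 : ℝ) < α := lt_trans one_pos hα
  set I := ∫⁻ y, ‖f y‖₊ ∂μ with hIdef
  have hItop : I ≠ ∞ := hf.2.ne
  set ν := μ.withDensity (fun y => (‖f y‖₊ : ℝ≥0∞)) with hνdef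
  have hνb : ∀ c ρ, 0 < ρ →
      ν (qball d c ρ) = ∫⁻ y in qball d c ρ, ‖f y‖₊ ∂μ :=
    fun c ρ h => withDensity_apply _ (hmeas c ρ h)
  have hνuniv : ν Set.univ = I := by
    rw [hνdef, withDensity_apply _ MeasurableSet.univ, Measure.restrict_univ]
  -- iterated doubling
  have hiter : ∀ (n : ℕ) (c : X) (ρ : ℝ), 0 < ρ →
      μ (qball d c (α ^ n * ρ)) ≤ (ENNReal.ofReal β) ^ n * μ (qball d c ρ) := by
    intro n
    induction n with
    | zero => intro c ρ h; simp
    | succ n ih =>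
      intro c ρ h
      have hpos : 0 < α ^ n * ρ := by positivity
      have harg : α ^ (n + 1) * ρ = α * (α ^ n * ρ) := by ring
      calc μ (qball d c (α ^ (n + 1) * ρ)) = μ (qball d c (α * (α ^ n * ρ))) := by rw [harg]
        _ ≤ ENNReal.ofReal β * μ (qball d c (α ^ n * ρ)) := hdouble c _ hpos
        _ ≤ ENNReal.ofReal β * ((ENNReal.ofReal β) ^ n * μ (qball d c ρ)) :=
            mul_le_mul_right (ih c ρ h) _
        _ = (ENNReal.ofReal β) ^ (n + 1) * μ (qball d c ρ) := by ring
  -- geometric enlargement lemma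
  have geom : ∀ (c1 c2 : X) (ρ1 ρ2 : ℝ), 0 < ρ1 → ρ2 ≤ 2 * ρ1 →
      (qball d c1 ρ1 ∩ qball d c2 ρ2).Nonempty →
      qball d c2 ρ2 ⊆ qball d c1 (α ^ m * ρ1) := by
    rintro c1 c2 ρ1 ρ2 h1 h12 ⟨w, hw1, hw2⟩ z hz
    simp only [qball, mem_setOf_eq] at hw1 hw2 hz ⊢
    have t1 := hd_tri c1 c2 z
    have t2 := hd_tri c1 w c2
    rw [hd_symm w c2] at t2
    have h3 : d c1 c2 ≤ K * (ρ1 + ρ2) := by nlinarith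
    have h4 : d c1 z < K * (K * (ρ1 + ρ2) + ρ2) := by nlinarith
    have h5 : K * (K * (ρ1 + ρ2) + ρ2) ≤ α ^ m * ρ1 := by
      nlinarith [mul_nonneg (sub_nonneg.mpr hm) h1.le,
        mul_nonneg (mul_nonneg hK0.le hK0.le) (sub_nonneg.mpr h12),
        mul_nonneg hK0.le (sub_nonneg.mpr h12),
        mul_nonneg (mul_nonneg (mul_nonneg hK0.le hK0.le) (sub_nonneg.mpr hK)) h1.le,
        mul_nonneg (mul_nonneg hK0.le (sub_nonneg.mpr hK)) h1.le]
    linarith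
  -- families of "heavy" balls of bounded radius
  set t : ℕ → Set (X × ℝ) := fun n =>
    {p | 0 < p.2 ∧ p.2 ≤ (n : ℝ) ∧ r * μ (qball d p.1 p.2) < ν (qball d p.1 p.2)} with htdef
  set T : ℕ → Set X := fun n => ⋃ p ∈ t n, qball d p.1 p.2 with hTdef
  have key : ∀ n, μ (T n) ≤ r⁻¹ * (ENNReal.ofReal β) ^ m * I := by
    intro n
    obtain ⟨u, hut, hdisj, hcov⟩ :=
      Vitali.exists_disjoint_subfamily_covering_enlargement
        (fun p : X × ℝ => qball d p.1 p.2) (t n) (fun p => p.2) 2 one_lt_two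
        (fun p hp => hp.1.le) (n : ℝ) (fun p hp => hp.2.1)
        (fun p hp => ⟨p.1, by simpa [qball, (hd_eq p.1 p.1).mpr rfl] using hp.1⟩)
    have hνpos : ∀ p ∈ t n, 0 < ν (qball d p.1 p.2) := by
      intro p hp
      exact lt_of_le_of_lt zero_le hp.2.2
    have hνunion_ne_top : ν (⋃ p : u, qball d p.1.1 p.1.2) ≠ ∞ :=
      (lt_of_le_of_lt (measure_mono (subset_univ _)) (hνuniv ▸ hItop.lt_top)).ne
    have hcntu : u.Countable := by
      have hc := Measure.countable_meas_pos_of_disjoint_of_meas_iUnion_ne_top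
        (μ := ν) (As := fun p : u => qball d p.1.1 p.1.2)
        (fun p => hmeas _ _ (hut p.2).1)
        (fun p q hpq => hdisj p.2 q.2 (fun h => hpq (Subtype.ext h)))
        hνunion_ne_top
      have huniv : {i : ↥u | 0 < ν (qball d i.1.1 i.1.2)} = Set.univ :=
        eq_univ_of_forall fun p => hνpos p.1 (hut p.2)
      rw [huniv] at hc
      exact Set.countable_coe_iff.mp (Set.countable_univ_iff.mp hc)
    have hTsub : T n ⊆ ⋃ p ∈ u, qball d p.1 (α ^ m * p.2) := by
      intro x hx
      obtain ⟨a, ha, hxa⟩ := mem_iUnion₂.mp hx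
      obtain ⟨b, hbu, hinter, hle⟩ := hcov a ha
      obtain ⟨w, hwa, hwb⟩ := hinter
      have hsub := geom b.1 a.1 b.2 a.2 (hut hbu).1 (by linarith) ⟨w, hwb, hwa⟩
      exact mem_iUnion₂.mpr ⟨b, hbu, hsub hxa⟩
    have hterm : ∀ p : u, μ (qball d p.1.1 (α ^ m * p.1.2)) ≤
        (ENNReal.ofReal β) ^ m * r⁻¹ * ν (qball d p.1.1 p.1.2) := by
      intro p
      have hp := hut p.2
      have h1 : r * μ (qball d p.1.1 p.1.2) ≤ ν (qball d p.1.1 p.1.2) := hp.2.2.le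
      have h2 : μ (qball d p.1.1 p.1.2) ≤ r⁻¹ * ν (qball d p.1.1 p.1.2) := by
        calc μ (qball d p.1.1 p.1.2) = r⁻¹ * (r * μ (qball d p.1.1 p.1.2)) := by
              rw [← mul_assoc, ENNReal.inv_mul_cancel hr0.ne' hrtop, one_mul]
          _ ≤ r⁻¹ * ν (qball d p.1.1 p.1.2) := mul_le_mul_right h1 _
      calc μ (qball d p.1.1 (α ^ m * p.1.2))
          ≤ (ENNReal.ofReal β) ^ m * μ (qball d p.1.1 p.1.2) := hiter m _ _ hp.1
        _ ≤ (ENNReal.ofReal β) ^ m * (r⁻¹ * ν (qball d p.1.1 p.1.2)) := mul_le_mul_right h2 _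
        _ = (ENNReal.ofReal β) ^ m * r⁻¹ * ν (qball d p.1.1 p.1.2) := by rw [mul_assoc]
    calc μ (T n) ≤ μ (⋃ p ∈ u, qball d p.1 (α ^ m * p.2)) := measure_mono hTsub
      _ ≤ ∑' p : u, μ (qball d p.1.1 (α ^ m * p.1.2)) := measure_biUnion_le μ hcntu _
      _ ≤ ∑' p : u, (ENNReal.ofReal β) ^ m * r⁻¹ * ν (qball d p.1.1 p.1.2) :=
          ENNReal.tsum_le_tsum hterm
      _ = (ENNReal.ofReal β) ^ m * r⁻¹ * ∑' p : u, ν (qball d p.1.1 p.1.2) :=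
          ENNReal.tsum_mul_left
      _ = (ENNReal.ofReal β) ^ m * r⁻¹ * ν (⋃ p ∈ u, qball d p.1 p.2) := by
          rw [measure_biUnion hcntu hdisj (fun p hp => hmeas _ _ (hut hp).1)]
      _ ≤ (ENNReal.ofReal β) ^ m * r⁻¹ * I := by
          refine mul_le_mul_right ?_ _
          exact hνuniv ▸ measure_mono (subset_univ _)
      _ = r⁻¹ * (ENNReal.ofReal β) ^ m * I := by rw [mul_comm ((ENNReal.ofReal β) ^ m) r⁻¹]
  have hmono : Monotone T := by
    intro a b hab
    refine iUnion₂_subset fun p hp => ?_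
    exact subset_iUnion₂_of_subset p
      ⟨hp.1, hp.2.1.trans (Nat.cast_le.mpr hab), hp.2.2⟩ subset_rfl
  have hsub : {x | r < ⨆ B ∈ {B : Set X | (∃ c ρ, 0 < ρ ∧ B = qball d c ρ) ∧ x ∈ B},
      (∫⁻ y in B, ‖f y‖₊ ∂μ) / μ B} ⊆ ⋃ n, T n := by
    intro x hx
    simp only [mem_setOf_eq] at hx
    obtain ⟨B, hB⟩ := lt_iSup_iff.mp hx
    obtain ⟨hBmem, hrB⟩ := lt_iSup_iff.mp hB
    obtain ⟨⟨c, ρ, hρ, rfl⟩, hxB⟩ := hBmem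
    have hμB := hball c ρ hρ
    have hmul : r * μ (qball d c ρ) < ∫⁻ y in qball d c ρ, ‖f y‖₊ ∂μ :=
      (ENNReal.lt_div_iff_mul_lt (Or.inl hμB.1.ne') (Or.inl hμB.2.ne)).mp hrB
    refine mem_iUnion.mpr ⟨⌈ρ⌉₊, mem_iUnion₂.mpr ⟨(c, ρ), ?_, hxB⟩⟩
    exact ⟨hρ, Nat.le_ceil ρ, by rw [hνb c ρ hρ]; exact hmul⟩
  calc μ {x | r < ⨆ B ∈ {B : Set X | (∃ c ρ, 0 < ρ ∧ B = qball d c ρ) ∧ x ∈ B},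
        (∫⁻ y in B, ‖f y‖₊ ∂μ) / μ B}
      ≤ μ (⋃ n, T n) := measure_mono hsub
    _ = ⨆ n, μ (T n) := Directed.measure_iUnion hmono.directed_le
    _ ≤ r⁻¹ * (ENNReal.ofReal β) ^ m * I := iSup_le key
end

section
/- Let (X, {Q_x}, μ) be an abstract Hardy–Littlewood system with Q = ⋃ₓ Q_x countable, each member of Q Carathéodory measurable with respect to the outer measure μ, Q ∩ Q' ∈ {Q, Q', ∅} for all Q, Q' ∈ Q, μ(Q) ≤ μ(Q') whenever Q ⊊ Q' in Q, and for every ε > 0 the set {μ(Q) : Q ∈ Q, μ(Q) > ε} has no limit point in (0,∞). Then for every set function F : Q → [0,∞] and r > 0, μ{x : sup_{Q∈Q_x} F(Q)/μ(Q) > r} ≤ r⁻¹ ‖F‖_Q; i.e., the Hardy–Littlewood maximal constant is at most 1. -/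
open Set MeasureTheory ENNReal

theorem dyadic_hl_constant_le_one {X : Type*}
    (Qx : X → Set (Set X)) (μ : MeasureTheory.OuterMeasure X)
    (hne : ∀ x, (Qx x).Nonempty) (hmem : ∀ x, ∀ Q ∈ Qx x, x ∈ Q)
    (hfin : ∀ Q ∈ ⋃ x, Qx x, 0 < μ Q ∧ μ Q < ∞)
    (hD1 : ∀ Q ∈ ⋃ x, Qx x, μ.IsCaratheodory Q)
    (hD2 : (⋃ x, Qx x).Countable)
    (hD3 : ∀ Q ∈ ⋃ x, Qx x, ∀ Q' ∈ ⋃ x, Qx x,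
      Q ∩ Q' = Q ∨ Q ∩ Q' = Q' ∨ Q ∩ Q' = ∅)
    (hD4 : ∀ Q ∈ ⋃ x, Qx x, ∀ Q' ∈ ⋃ x, Qx x, Q ⊂ Q' → μ Q ≤ μ Q')
    (hD5 : ∀ ε : ℝ≥0∞, 0 < ε →
      ∀ a ∈ Set.Ioo (0 : ℝ≥0∞) ⊤,
        a ∉ closure ({v | ∃ Q ∈ ⋃ x, Qx x, ε < μ Q ∧ μ Q = v} \ {a})) :
    ∀ F : Set X → ℝ≥0∞, ∀ r : ℝ≥0∞, 0 < r → r ≠ ⊤ →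
      μ {x | r < hlMax Qx (μ ·) F x} ≤ r⁻¹ * hlNorm (⋃ x, Qx x) F := by
  intro F r hr hrtop
  classical
  set 𝒬 : Set (Set X) := ⋃ x, Qx x with h𝒬
  have hrinv0 : r⁻¹ ≠ 0 := by simp [hrtop]
  have hrinvtop : r⁻¹ ≠ ∞ := by simp [hr.ne']
  by_cases hF : hlNorm 𝒬 F = ∞
  · rw [hF, ENNReal.mul_top hrinv0]; exact le_top
  -- basic facts
  have hpos : ∀ Q ∈ 𝒬, μ Q ≠ 0 := fun Q hQ => (hfin Q hQ).1.ne'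
  have hfin' : ∀ Q ∈ 𝒬, μ Q ≠ ∞ := fun Q hQ => (hfin Q hQ).2.ne
  have hneQ : ∀ Q ∈ 𝒬, Q.Nonempty := by
    intro Q hQ
    rcases Q.eq_empty_or_nonempty with h | h
    · exact absurd (by rw [h]; exact measure_empty) (hpos Q hQ)
    · exact h
  have hnest : ∀ Q ∈ 𝒬, ∀ Q' ∈ 𝒬, (Q ∩ Q').Nonempty → Q ⊆ Q' ∨ Q' ⊆ Q := by
    intro Q hQ Q' hQ' hne'
    rcases hD3 Q hQ Q' hQ' with h | h | h
    · exact Or.inl (by rw [← h]; exact inter_subset_right)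
    · exact Or.inr (by rw [← h]; exact inter_subset_left)
    · rw [h] at hne'; exact absurd hne' (by simp)
  have hFnorm : ∀ Q ∈ 𝒬, F Q ≤ hlNorm 𝒬 F := by
    intro Q hQ
    have h1 : ({Q} : Finset (Set X)) ⊆ ↑({Q} : Finset (Set X)) := by simp
    have := le_iSup
      (fun s : {s : Finset (Set X) // ↑s ⊆ 𝒬 ∧ (s : Set (Set X)).Pairwise Disjoint} =>
        ∑ R ∈ s.1, F R)
      ⟨{Q}, by simpa using hQ, by simp⟩
    simpa [hlNorm] using this
  -- the family of "bad" cubes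
  set 𝒞 : Set (Set X) := {Q | Q ∈ 𝒬 ∧ r < F Q / μ Q} with h𝒞
  have h𝒞Q : 𝒞 ⊆ 𝒬 := fun Q hQ => hQ.1
  have hbound : ∀ Q ∈ 𝒞, μ Q ≤ r⁻¹ * F Q := by
    intro Q hQ
    have h1 : r * μ Q < F Q := by
      have := hQ.2
      rwa [ENNReal.lt_div_iff_mul_lt (Or.inl (hpos Q hQ.1)) (Or.inl (hfin' Q hQ.1))] at this
    calc μ Q = r⁻¹ * (r * μ Q) := by
          rw [← mul_assoc, ENNReal.inv_mul_cancel hr.ne' hrtop, one_mul]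
      _ ≤ r⁻¹ * F Q := mul_le_mul_right h1.le _
  have hμbd : ∀ Q ∈ 𝒞, μ Q ≤ r⁻¹ * hlNorm 𝒬 F := fun Q hQ =>
    (hbound Q hQ).trans (mul_le_mul_right (hFnorm Q (h𝒞Q hQ)) _)
  -- branches
  set Branch : Set X → Set X := fun Q => ⋃₀ {R | R ∈ 𝒞 ∧ Q ⊆ R} with hBr
  have hsubBr : ∀ Q ∈ 𝒞, Q ⊆ Branch Q := fun Q hQ =>
    subset_sUnion_of_mem ⟨hQ, subset_refl Q⟩
  have claimA : ∀ Q ∈ 𝒞, ∀ Q' ∈ 𝒞, Q ⊆ Q' → Branch Q = Branch Q' := by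
    intro Q hQ Q' hQ' hQQ'
    apply Subset.antisymm
    · apply sUnion_subset
      rintro R ⟨hR, hQR⟩
      have hRQ' : (R ∩ Q').Nonempty := ((hneQ Q (h𝒞Q hQ)).mono (subset_inter hQR hQQ'))
      rcases hnest R (h𝒞Q hR) Q' (h𝒞Q hQ') hRQ' with h | h
      · exact h.trans (hsubBr Q' hQ')
      · exact subset_sUnion_of_mem ⟨hR, h⟩
    · apply sUnion_subset
      rintro R ⟨hR, hQ'R⟩
      exact subset_sUnion_of_mem ⟨hR, hQQ'.trans hQ'R⟩
  have claimB : ∀ Q ∈ 𝒞, ∀ Q' ∈ 𝒞, (Branch Q ∩ Branch Q').Nonempty →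
      Branch Q = Branch Q' := by
    intro Q hQ Q' hQ' ⟨z, hz1, hz2⟩
    obtain ⟨R₁, ⟨hR₁, hQR₁⟩, hzR₁⟩ := hz1
    obtain ⟨R₂, ⟨hR₂, hQR₂⟩, hzR₂⟩ := hz2
    rcases hnest R₁ (h𝒞Q hR₁) R₂ (h𝒞Q hR₂) ⟨z, hzR₁, hzR₂⟩ with h | h
    · rw [claimA Q hQ R₁ hR₁ hQR₁, claimA R₁ hR₁ R₂ hR₂ h,
        ← claimA Q' hQ' R₂ hR₂ hQR₂]
    · rw [claimA Q hQ R₁ hR₁ hQR₁, ← claimA R₂ hR₂ R₁ hR₁ h,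
        ← claimA Q' hQ' R₂ hR₂ hQR₂]
  -- measurability setup
  letI : MeasurableSpace X := μ.caratheodory
  have hmeas : ∀ Q ∈ 𝒬, MeasurableSet Q := fun Q hQ =>
    (OuterMeasure.isCaratheodory_iff μ).mpr (hD1 Q hQ)
  -- key: each branch has a cube of maximal measure controlling it
  have hkey : ∀ Q ∈ 𝒞, ∃ Qs ∈ 𝒞, Qs ⊆ Branch Q ∧ μ (Branch Q) ≤ r⁻¹ * F Qs := by
    intro Q hQ
    set C : Set (Set X) := {R | R ∈ 𝒞 ∧ Q ⊆ R} with hC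
    have hCsub : C ⊆ 𝒞 := fun R hR => hR.1
    have hQC : Q ∈ C := ⟨hQ, subset_refl Q⟩
    have hCcount : C.Countable := hD2.mono (hCsub.trans h𝒞Q)
    haveI := hCcount.to_subtype
    set L : ℝ≥0∞ := ⨆ R : C, μ (R : Set X) with hL
    have hLbd : L ≤ r⁻¹ * hlNorm 𝒬 F := iSup_le fun R => hμbd R (hCsub R.2)
    have hLtop : L ≠ ∞ :=
      (hLbd.trans_lt (ENNReal.mul_lt_top hrinvtop.lt_top (lt_top_iff_ne_top.mpr hF))).ne
    have hL0 : 0 < L :=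
      (hfin Q (h𝒞Q hQ)).1.trans_le (le_iSup (fun R : C => μ (R : Set X)) ⟨Q, hQC⟩)
    -- the supremum is attained
    have hatt : ∃ R : C, μ (R : Set X) = L := by
      by_contra hnot
      push_neg at hnot
      refine hD5 (L / 2) (ENNReal.half_pos hL0.ne') L ⟨hL0, hLtop.lt_top⟩ ?_
      rw [mem_closure_iff_nhds]
      intro U hU
      obtain ⟨l, hlL, hsub⟩ := exists_Ioc_subset_of_mem_nhds hU ⟨0, hL0⟩
      have hmL : max l (L / 2) < L := max_lt hlL (ENNReal.half_lt_self hL0.ne' hLtop)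
      obtain ⟨R, hmR⟩ : ∃ R : C, max l (L / 2) < μ (R : Set X) := by
        have := hmL.trans_le (le_refl L)
        rw [hL] at this
        exact lt_iSup_iff.mp this
      have hRL : μ (R : Set X) ≤ L := le_iSup (fun R : C => μ (R : Set X)) R
      refine ⟨μ (R : Set X), hsub ⟨(le_max_left _ _).trans_lt hmR, hRL⟩,
        ⟨⟨R, h𝒞Q (hCsub R.2), (le_max_right _ _).trans_lt hmR, rfl⟩, hnot R⟩⟩
    obtain ⟨⟨Qs, hQsC⟩, hQsL⟩ := hatt
    refine ⟨Qs, hCsub hQsC, subset_sUnion_of_mem hQsC, ?_⟩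
    -- μ (Branch Q) = L via the Caratheodory measure
    have hdir : Directed (· ⊆ ·) (fun R : C => (R : Set X)) := by
      rintro ⟨R₁, hR₁⟩ ⟨R₂, hR₂⟩
      have : (R₁ ∩ R₂).Nonempty :=
        (hneQ Q (h𝒞Q hQ)).mono (subset_inter hR₁.2 hR₂.2)
      rcases hnest R₁ (h𝒞Q (hCsub hR₁)) R₂ (h𝒞Q (hCsub hR₂)) this with h | h
      · exact ⟨⟨R₂, hR₂⟩, h, subset_refl _⟩
      · exact ⟨⟨R₁, hR₁⟩, subset_refl _, h⟩
    set ν : Measure X := μ.toMeasure le_rfl with hν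
    have hνeq : ∀ R : C, ν (R : Set X) = μ (R : Set X) := fun R =>
      toMeasure_apply μ le_rfl (hmeas R (h𝒞Q (hCsub R.2)))
    have hBrEq : Branch Q = ⋃ R : C, (R : Set X) := by
      rw [hBr]; exact (sUnion_eq_iUnion)
    have hBrMeas : MeasurableSet (Branch Q) := by
      rw [hBrEq]
      exact MeasurableSet.iUnion fun R => hmeas R (h𝒞Q (hCsub R.2))
    have : μ (Branch Q) = L := by
      calc μ (Branch Q) = ν (Branch Q) :=
            (toMeasure_apply μ le_rfl hBrMeas).symm
        _ = ν (⋃ R : C, (R : Set X)) := by rw [hBrEq]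
        _ = ⨆ R : C, ν (R : Set X) := hdir.measure_iUnion
        _ = ⨆ R : C, μ (R : Set X) := by simp only [hνeq]
        _ = L := rfl
    rw [this, ← hQsL]
    exact hbound Qs (hCsub hQsC)
  -- choose a controlling cube for each branch
  set ℬ : Set (Set X) := Branch '' 𝒞 with hℬ
  have hℬcount : ℬ.Countable := (hD2.mono h𝒞Q).image Branch
  haveI := hℬcount.to_subtype
  have hselex : ∀ b : ℬ, ∃ Qs ∈ 𝒞, Qs ⊆ (b : Set X) ∧ μ (b : Set X) ≤ r⁻¹ * F Qs := by
    rintro ⟨b, Q, hQ, rfl⟩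
    exact hkey Q hQ
  choose sel hsel𝒞 hselsub hselbd using hselex
  -- distinct branches are disjoint, hence the selected cubes are pairwise disjoint
  have hdisj : ∀ b b' : ℬ, b ≠ b' → Disjoint (sel b) (sel b') := by
    rintro ⟨b, Q, hQ, rfl⟩ ⟨b', Q', hQ', rfl⟩ hne'
    have hbb' : Disjoint (Branch Q) (Branch Q') := by
      rw [disjoint_iff_inter_eq_empty]
      by_contra h
      exact hne' (Subtype.ext (claimB Q hQ Q' hQ' (nonempty_iff_ne_empty.mpr h)))
    exact hbb'.mono (hselsub ⟨_, Q, hQ, rfl⟩) (hselsub ⟨_, Q', hQ', rfl⟩)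
  have hselinj : Function.Injective sel := by
    intro b b' h
    by_contra hne'
    have := hdisj b b' hne'
    rw [h] at this
    exact (hneQ (sel b') (h𝒞Q (hsel𝒞 b'))).ne_empty (disjoint_self.mp this)
  -- main estimate
  have hcover : {x | r < hlMax Qx (μ ·) F x} ⊆ ⋃ b : ℬ, (b : Set X) := by
    intro x hx
    have : r < ⨆ Q ∈ Qx x, F Q / μ Q := hx
    simp only [lt_iSup_iff] at this
    obtain ⟨Q, hQx, hlt⟩ := this
    have hQ𝒬 : Q ∈ 𝒬 := mem_iUnion.mpr ⟨x, hQx⟩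
    have hQ𝒞 : Q ∈ 𝒞 := ⟨hQ𝒬, hlt⟩
    exact mem_iUnion.mpr ⟨⟨Branch Q, Q, hQ𝒞, rfl⟩, hsubBr Q hQ𝒞 (hmem x Q hQx)⟩
  calc μ {x | r < hlMax Qx (μ ·) F x} ≤ μ (⋃ b : ℬ, (b : Set X)) :=
        measure_mono hcover
    _ ≤ ∑' b : ℬ, μ (b : Set X) := measure_iUnion_le _
    _ ≤ ∑' b : ℬ, r⁻¹ * F (sel b) := ENNReal.tsum_le_tsum fun b => hselbd b
    _ = r⁻¹ * ∑' b : ℬ, F (sel b) := ENNReal.tsum_mul_left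
    _ ≤ r⁻¹ * hlNorm 𝒬 F := by
        apply mul_le_mul_right
        rw [ENNReal.tsum_eq_iSup_sum]
        apply iSup_le
        intro t
        have himg : ∑ Q ∈ t.image sel, F Q = ∑ b ∈ t, F (sel b) :=
          Finset.sum_image fun b _ b' _ h => hselinj h
        rw [← himg]
        refine le_iSup_of_le ⟨t.image sel, ?_, ?_⟩ le_rfl
        · intro Q hQ
          simp only [Finset.coe_image, mem_image, Finset.mem_coe] at hQ
          obtain ⟨b, _, rfl⟩ := hQ
          exact h𝒞Q (hsel𝒞 b)
        · intro Q hQ Q' hQ' hQQ'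
          simp only [Finset.coe_image, mem_image, Finset.mem_coe] at hQ hQ'
          obtain ⟨b, _, rfl⟩ := hQ
          obtain ⟨b', _, rfl⟩ := hQ'
          exact hdisj b b' (fun h => hQQ' (by rw [h]))
end
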